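/- arXiv:1703.08765 — 7 statements merged into one kernel-verified Lean document; each statement's English description precedes it below -/
import Mathlib

section
/- For n ≥ 5, the lattice Λₙ = {a ∈ ℤⁿ : a₁ ≡ ⋯ ≡ aₙ (mod 2)} with the Euclidean norm is non-standard: no ℤ-basis b₁,…,bₙ of Λₙ satisfies ‖bᵢ‖₂ = λᵢ for all i, where λ₁,…,λₙ are the successive minima of Λₙ. -/
/-- The lattice Λₙ of integer vectors all of whose coordinates are congruent mod 2. -/
def LatticeMod2 (n : ℕ) : Set (EuclideanSpace ℝ (Fin n)) :=
  {x | ∃ a : Fin n → ℤ, (∀ i, x i = a i) ∧ ∀ i j, a i % 2 = a j % 2}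

/-- The i-th successive minimum of a lattice Λ ⊆ ℝⁿ (Euclidean norm). -/
noncomputable def succMin (n : ℕ) (Λ : Set (EuclideanSpace ℝ (Fin n))) (i : ℕ) : ℝ :=
  sInf {r : ℝ | i ≤ Module.finrank ℝ (Submodule.span ℝ (Λ ∩ Metric.closedBall 0 r))}

/-- The submodule of vectors with all coordinates in 2ℤ. -/
def evenSub (n : ℕ) : Submodule ℤ (EuclideanSpace ℝ (Fin n)) where
  carrier := {x | ∀ j, ∃ k : ℤ, x j = 2 * k}
  add_mem' := by
    rintro x y hx hy j
    obtain ⟨k, hk⟩ := hx j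
    obtain ⟨l, hl⟩ := hy j
    exact ⟨k + l, by simp only [PiLp.add_apply, hk, hl]; push_cast; ring⟩
  zero_mem' := fun j => ⟨0, by simp⟩
  smul_mem' := by
    rintro c x hx j
    obtain ⟨k, hk⟩ := hx j
    exact ⟨c * k, by simp only [PiLp.smul_apply, zsmul_eq_mul, hk]; push_cast; ring⟩

lemma single_mem (n : ℕ) (j : Fin n) : EuclideanSpace.single j (2:ℝ) ∈ LatticeMod2 n := by
  refine ⟨fun k => if k = j then 2 else 0, fun i => ?_, fun i k => ?_⟩
  · rw [EuclideanSpace.single_apply]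
    by_cases h : i = j <;> simp [h]
  · by_cases h1 : i = j <;> by_cases h2 : k = j <;> simp [h1, h2]

lemma succMin_le_two (n : ℕ) (i : Fin n) : succMin n (LatticeMod2 n) (i + 1) ≤ 2 := by
  apply csInf_le
  · refine ⟨0, fun r hr => ?_⟩
    by_contra h
    push_neg at h
    rw [Set.mem_setOf_eq, Metric.closedBall_eq_empty.mpr h, Set.inter_empty,
      Submodule.span_empty, finrank_bot] at hr
    omega
  · rw [Set.mem_setOf_eq]
    have htop : Submodule.span ℝ (LatticeMod2 n ∩ Metric.closedBall 0 2) = ⊤ := by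
      rw [eq_top_iff, ← (EuclideanSpace.basisFun (Fin n) ℝ).toBasis.span_eq, Submodule.span_le]
      rintro x ⟨j, rfl⟩
      have h2 : EuclideanSpace.single j (2:ℝ) ∈
          Submodule.span ℝ (LatticeMod2 n ∩ Metric.closedBall 0 2) := by
        apply Submodule.subset_span
        refine ⟨single_mem n j, ?_⟩
        rw [Metric.mem_closedBall, dist_zero_right, EuclideanSpace.norm_single]
        norm_num
      have : (EuclideanSpace.basisFun (Fin n) ℝ).toBasis j
          = (2:ℝ)⁻¹ • EuclideanSpace.single j (2:ℝ) := by
        ext k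
        simp [EuclideanSpace.basisFun_apply, EuclideanSpace.single_apply]
      rw [this]
      exact Submodule.smul_mem _ _ h2
    rw [htop]
    have := finrank_euclideanSpace_fin (𝕜 := ℝ) (n := n)
    rw [finrank_top, this]
    omega

/-- For n ≥ 5, the lattice Λₙ is non-standard: no ℤ-basis achieves the successive minima. -/
theorem stmt_5 (n : ℕ) (hn : 5 ≤ n) :
    ¬ ∃ b : Fin n → EuclideanSpace ℝ (Fin n),
      LinearIndependent ℝ b ∧
      ((Submodule.span ℤ (Set.range b) :
          Submodule ℤ (EuclideanSpace ℝ (Fin n))) : Set (EuclideanSpace ℝ (Fin n))) = LatticeMod2 n ∧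
      ∀ i : Fin n, ‖b i‖ = succMin n (LatticeMod2 n) (i + 1) := by
  rintro ⟨b, hli, hspan, hmin⟩
  -- every b i lies in the even submodule
  have hrange : Set.range b ⊆ (evenSub n : Set (EuclideanSpace ℝ (Fin n))) := by
    rintro x ⟨i, rfl⟩
    have hmem : b i ∈ LatticeMod2 n := by
      rw [← hspan]; exact Submodule.subset_span (Set.mem_range_self i)
    obtain ⟨a, ha, hpar⟩ := hmem
    have hle : ‖b i‖ ≤ 2 := (hmin i) ▸ succMin_le_two n i
    -- sum of squares ≤ 4
    have hsum : (∑ j, ((a j : ℝ))^2) ≤ 4 := by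
      have := EuclideanSpace.norm_eq (b i)
      rw [this] at hle
      have h4 : (∑ j, ‖b i j‖^2) ≤ 4 := by
        have hnn : (0:ℝ) ≤ ∑ j, ‖b i j‖^2 := Finset.sum_nonneg fun j _ => sq_nonneg _
        nlinarith [Real.sq_sqrt hnn, Real.sqrt_nonneg (∑ j, ‖b i j‖^2)]
      calc (∑ j, ((a j : ℝ))^2) = ∑ j, ‖b i j‖^2 := by
            refine Finset.sum_congr rfl fun j _ => ?_
            rw [ha j, Real.norm_eq_abs, sq_abs]
        _ ≤ 4 := h4
    -- some coordinate is zero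
    have hzero : ∃ j, a j = 0 := by
      by_contra h
      push_neg at h
      have : (n : ℝ) ≤ ∑ j, ((a j : ℝ))^2 := by
        calc (n:ℝ) = ∑ _j : Fin n, (1:ℝ) := by simp
          _ ≤ ∑ j, ((a j : ℝ))^2 := by
            refine Finset.sum_le_sum fun j _ => ?_
            have : (1:ℤ) ≤ (a j)^2 := by
              rcases lt_or_gt_of_ne (h j) with h' | h' <;> nlinarith
            exact_mod_cast this
      have : (5:ℝ) ≤ 4 := by
        have hn' : (5:ℝ) ≤ (n:ℝ) := by exact_mod_cast hn
        linarith
      linarith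
    obtain ⟨j0, hj0⟩ := hzero
    intro j
    have : a j % 2 = 0 := by
      have := hpar j j0
      omega
    obtain ⟨k, hk⟩ : (2:ℤ) ∣ a j := Int.dvd_of_emod_eq_zero this
    exact ⟨k, by rw [ha j, hk]; push_cast; ring⟩
  have hsub : Submodule.span ℤ (Set.range b) ≤ evenSub n := Submodule.span_le.mpr hrange
  -- (1,...,1) is in the lattice
  have hone : (WithLp.toLp 2 (fun _ => (1:ℝ)) : EuclideanSpace ℝ (Fin n)) ∈ LatticeMod2 n :=
    ⟨fun _ => 1, fun _ => by norm_num, fun _ _ => rfl⟩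
  rw [← hspan] at hone
  obtain ⟨k, hk⟩ := hsub hone ⟨0, Nat.lt_of_lt_of_le (by norm_num) hn⟩
  have hk' : (1:ℝ) = 2 * (k:ℝ) := hk
  have : ((2 * k : ℤ) : ℝ) = 1 := by push_cast; linarith
  have : (2 * k : ℤ) = 1 := by exact_mod_cast this
  omega
end

section
/- Let Λ ⊆ ℝⁿ be a lattice generated by b₁,…,bₙ with ‖bᵢ‖₂ ≤ λ for all i, and let v ∈ ℝⁿ. If min_{u∈Λ} ‖v − u‖₂ = (√n/2)·λ, then the vectors b₁,…,bₙ are mutually orthogonal, each has norm exactly λ, and v = Σᵢ (aᵢ + 1/2)bᵢ for some integers aᵢ. -/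
lemma step_min {E : Type*} [NormedAddCommGroup E] [InnerProductSpace ℝ E]
    (w c : E) (t : ℝ) (h0 : 0 ≤ t) (h1 : t ≤ 1) :
    ∃ δ : ℝ, (δ = 0 ∨ δ = 1) ∧
      ‖w + (t - δ) • c‖^2 ≤ ‖w‖^2 + t*(1-t)*‖c‖^2 := by
  have expand : ∀ r : ℝ, ‖w + r • c‖^2 = ‖w‖^2 + 2*(r*(inner ℝ w c : ℝ)) + r^2*‖c‖^2 := by
    intro r
    rw [norm_add_sq_real, real_inner_smul_right, norm_smul]
    rw [mul_pow, Real.norm_eq_abs, sq_abs]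
  by_cases hc : 2 * (inner ℝ w c : ℝ) ≤ (1 - 2*t) * ‖c‖^2
  · exact ⟨0, Or.inl rfl, by rw [sub_zero, expand]; nlinarith [mul_le_mul_of_nonneg_left hc h0]⟩
  · refine ⟨1, Or.inr rfl, by rw [expand]; nlinarith [mul_le_mul_of_nonneg_left (le_of_lt (lt_of_not_ge hc)) (sub_nonneg.mpr h1)]⟩

lemma greedy {n : ℕ} (b : Fin n → EuclideanSpace ℝ (Fin n)) (t : Fin n → ℝ)
    (h0 : ∀ i, 0 ≤ t i) (h1 : ∀ i, t i ≤ 1) (S : Finset (Fin n)) :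
    ∃ ε : Fin n → ℝ, (∀ i ∈ S, ε i = 0 ∨ ε i = 1) ∧ (∀ i ∉ S, ε i = t i) ∧
      ‖∑ i, (t i - ε i) • b i‖^2 ≤ ∑ i ∈ S, t i * (1 - t i) * ‖b i‖^2 := by
  classical
  induction S using Finset.induction_on with
  | empty => exact ⟨t, by simp, fun i _ => rfl, by simp⟩
  | @insert j S hjS ih =>
    obtain ⟨ε, hε01, hεout, hbound⟩ := ih
    obtain ⟨δ, hδ, hle⟩ := step_min (∑ i, (t i - ε i) • b i) (b j) (t j) (h0 j) (h1 j)
    refine ⟨Function.update ε j δ, ?_, ?_, ?_⟩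
    · intro i hi
      rcases Finset.mem_insert.mp hi with h | h
      · subst h; simpa using hδ
      · rcases eq_or_ne i j with rfl | hij
        · simpa using hδ
        · rw [Function.update_of_ne hij]; exact hε01 i h
    · intro i hi
      have hij : i ≠ j := fun h => hi (by simp [h])
      rw [Function.update_of_ne hij]; exact hεout i (fun h => hi (Finset.mem_insert_of_mem h))
    · have hεj : ε j = t j := hεout j hjS
      have hw : ∑ i, (t i - Function.update ε j δ i) • b i
          = (∑ i, (t i - ε i) • b i) + (t j - δ) • b j := by
        have h2 : ∀ i : Fin n, (t i - Function.update ε j δ i) • b i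
            = (t i - ε i) • b i + (if i = j then (t j - δ) • b j else 0) := by
          intro i
          rcases eq_or_ne i j with rfl | hij
          · simp [Function.update_self, hεj]
          · simp [Function.update_of_ne hij, hij]
        rw [Finset.sum_congr rfl (fun i _ => h2 i), Finset.sum_add_distrib]
        simp
      rw [hw, Finset.sum_insert hjS]
      calc ‖(∑ i, (t i - ε i) • b i) + (t j - δ) • b j‖^2
          ≤ ‖∑ i, (t i - ε i) • b i‖^2 + t j * (1 - t j) * ‖b j‖^2 := hle
        _ ≤ t j * (1 - t j) * ‖b j‖^2 + ∑ i ∈ S, t i * (1 - t i) * ‖b i‖^2 := by linarith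

set_option maxHeartbeats 1000000 in
/-- Equality case of the covering radius bound: if the distance from v to the lattice
equals (√n/2)·λ, then the generators are mutually orthogonal of norm λ and v is a deep
hole Σ (aᵢ + 1/2) bᵢ. -/
theorem stmt_8 (n : ℕ) (b : Fin n → EuclideanSpace ℝ (Fin n))
    (hli : LinearIndependent ℝ b) (lam : ℝ) (hlam : 0 < lam)
    (hb : ∀ i, ‖b i‖ ≤ lam) (v : EuclideanSpace ℝ (Fin n))
    (hmin : IsLeast {d : ℝ | ∃ u ∈ Submodule.span ℤ (Set.range b), ‖v - u‖ = d}
      (Real.sqrt n / 2 * lam)) :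
    (∀ i j, i ≠ j → (inner ℝ (b i) (b j) : ℝ) = 0) ∧
    (∀ i, ‖b i‖ = lam) ∧
    ∃ a : Fin n → ℤ, v = ∑ i, ((a i : ℝ) + 1 / 2) • b i := by
  classical
  set R : ℝ := Real.sqrt n / 2 * lam with hRdef
  have hR0 : 0 ≤ R := by positivity
  have hR2 : R^2 = n * lam^2 / 4 := by
    rw [hRdef, div_mul_eq_mul_div, div_pow, mul_pow, Real.sq_sqrt (Nat.cast_nonneg n)]
    ring
  -- lower bound for any lattice point
  have hlow : ∀ u ∈ Submodule.span ℤ (Set.range b), R ≤ ‖v - u‖ :=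
    fun u hu => hmin.2 ⟨u, hu, rfl⟩
  have hmem : ∀ m : Fin n → ℤ, (∑ i, ((m i : ℝ)) • b i) ∈ Submodule.span ℤ (Set.range b) := by
    intro m
    refine Submodule.sum_mem _ (fun i _ => ?_)
    rw [Int.cast_smul_eq_zsmul]
    exact Submodule.smul_mem _ (m i) (Submodule.subset_span (Set.mem_range_self i))
  -- dispose of the degenerate case n = 0
  rcases Nat.eq_zero_or_pos n with hn | hn
  · subst hn
    obtain ⟨u, hu, huv⟩ := hmin.1
    have h0 : Set.range b = ∅ := Set.range_eq_empty b
    rw [h0, Submodule.span_empty, Submodule.mem_bot] at hu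
    subst hu
    have hv0 : v = 0 := by
      have h1 : ‖v - 0‖ = 0 := by rw [huv, hRdef]; simp
      simpa using h1
    exact ⟨fun i => i.elim0, fun i => i.elim0, fun _ => 0, by simp [hv0]⟩
  haveI : Nonempty (Fin n) := ⟨⟨0, hn⟩⟩
  -- basis and coordinates
  have hcard : Fintype.card (Fin n) = Module.finrank ℝ (EuclideanSpace ℝ (Fin n)) := by simp
  let B := basisOfLinearIndependentOfCardEqFinrank hli hcard
  have hB : ∀ i, B i = b i := fun i => congrFun (coe_basisOfLinearIndependentOfCardEqFinrank hli hcard) i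
  obtain ⟨c, hv⟩ : ∃ c : Fin n → ℝ, v = ∑ i, c i • b i := by
    refine ⟨fun i => B.repr v i, ?_⟩
    conv_lhs => rw [← B.sum_repr v]
    exact Finset.sum_congr rfl (fun i _ => by rw [hB])
  obtain ⟨a, t, hct, ht0, ht1⟩ :
      ∃ (a : Fin n → ℤ) (t : Fin n → ℝ), (∀ i, c i = (a i : ℝ) + t i) ∧
        (∀ i, 0 ≤ t i) ∧ (∀ i, t i ≤ 1) :=
    ⟨fun i => ⌊c i⌋, fun i => c i - ⌊c i⌋, fun i => by ring,
      fun i => sub_nonneg.mpr (Int.floor_le (c i)),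
      fun i => show c i - (⌊c i⌋ : ℝ) ≤ 1 by linarith [Int.lt_floor_add_one (c i)]⟩
  obtain ⟨ε, hε01, -, hbound⟩ := greedy b t ht0 ht1 Finset.univ
  -- the lattice point u
  obtain ⟨m, hmr⟩ : ∃ m : Fin n → ℤ, ∀ i, (m i : ℝ) = (a i : ℝ) + ε i := by
    refine ⟨fun i => a i + (if ε i = 1 then 1 else 0), fun i => ?_⟩
    rcases hε01 i (Finset.mem_univ i) with h | h <;> simp [h]
  have hvu : v - (∑ i, ((m i : ℝ)) • b i) = ∑ i, (t i - ε i) • b i := by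
    rw [hv, ← Finset.sum_sub_distrib]
    refine Finset.sum_congr rfl (fun i _ => ?_)
    rw [← sub_smul, hmr i, hct i]
    ring_nf
  have hRle : R ≤ ‖∑ i, (t i - ε i) • b i‖ := by
    rw [← hvu]; exact hlow _ (hmem m)
  have hsq : R^2 ≤ ∑ i, t i * (1 - t i) * ‖b i‖^2 := by
    calc R^2 ≤ ‖∑ i, (t i - ε i) • b i‖^2 := pow_le_pow_left₀ hR0 hRle 2
      _ ≤ _ := hbound
  have hterm_le : ∀ i : Fin n, t i * (1 - t i) * ‖b i‖^2 ≤ lam^2/4 := by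
    intro i
    have h1 := ht0 i; have h2 := ht1 i; have h3 := hb i; have h4 := norm_nonneg (b i)
    have hbb : ‖b i‖^2 ≤ lam^2 := by nlinarith
    have htt : t i * (1 - t i) ≤ 1/4 := by nlinarith [sq_nonneg (1 - 2*t i)]
    have htt0 : 0 ≤ t i * (1 - t i) := mul_nonneg h1 (by linarith)
    linarith [mul_le_mul htt hbb (sq_nonneg ‖b i‖) (by norm_num : (0:ℝ) ≤ 1/4)]
  have hsum_eq : ∑ i, t i * (1 - t i) * ‖b i‖^2 = ∑ _i : Fin n, lam^2/4 := by
    have hle' : ∑ i, t i * (1 - t i) * ‖b i‖^2 ≤ ∑ _i : Fin n, lam^2/4 :=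
      Finset.sum_le_sum (fun i _ => hterm_le i)
    have : (∑ _i : Fin n, lam^2/4) = n * lam^2 / 4 := by
      rw [Finset.sum_const, Finset.card_univ, Fintype.card_fin, nsmul_eq_mul]; ring
    linarith [hsq, hR2.symm.le]
  have hterm : ∀ i : Fin n, t i * (1 - t i) * ‖b i‖^2 = lam^2/4 :=
    fun i => (Finset.sum_eq_sum_iff_of_le (fun i _ => hterm_le i)).mp hsum_eq i (Finset.mem_univ i)
  have hnb : ∀ i, ‖b i‖ = lam := by
    intro i
    have h := hterm i
    have h1 := ht0 i; have h2 := ht1 i; have h3 := hb i; have h4 := norm_nonneg (b i)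
    have htt : t i * (1 - t i) ≤ 1/4 := by nlinarith [sq_nonneg (1 - 2*t i)]
    have hl2 : lam^2 ≤ ‖b i‖^2 := by
      linarith [mul_le_mul_of_nonneg_right htt (sq_nonneg ‖b i‖)]
    exact le_antisymm h3 ((pow_le_pow_iff_left₀ hlam.le h4 two_ne_zero).mp hl2)
  have ht : ∀ i, t i = 1/2 := by
    intro i
    have h := hterm i
    rw [hnb i] at h
    have h5 : (2*t i - 1)^2 * lam^2 = 0 := by nlinarith [h]
    rcases mul_eq_zero.mp h5 with h6 | h6
    · have := pow_eq_zero_iff (n := 2) (by norm_num) |>.mp h6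
      linarith
    · exfalso
      have := pow_eq_zero_iff (n := 2) (by norm_num) |>.mp h6
      linarith
  have hv' : v = ∑ i, ((a i : ℝ) + 1/2) • b i := by
    rw [hv]
    refine Finset.sum_congr rfl (fun i _ => ?_)
    have h9 : c i = (a i : ℝ) + 1/2 := by rw [hct i, ht i]
    rw [h9]
  refine ⟨?_, hnb, ⟨a, hv'⟩⟩
  -- Stage 2: orthogonality
  set r : Bool → ℝ := fun s => if s then (1/2 : ℝ) else -(1/2) with hr
  set x : (Fin n → Bool) → EuclideanSpace ℝ (Fin n) := fun ε => ∑ k, r (ε k) • b k with hx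
  have hrr : ∀ s : Bool, r s * r s = 1/4 := by intro s; cases s <;> norm_num [hr]
  have hrneg : ∀ s : Bool, r (!s) = - r s := by intro s; cases s <;> norm_num [hr]
  have hxlat : ∀ ε : Fin n → Bool, R ≤ ‖x ε‖ := by
    intro ε
    have hxv : v - ∑ k, ((if ε k then a k else a k + 1 : ℤ) : ℝ) • b k = x ε := by
      simp only [hx]
      rw [hv', ← Finset.sum_sub_distrib]
      refine Finset.sum_congr rfl fun k _ => ?_
      rw [← sub_smul]
      congr 1
      cases hεk : ε k <;> simp only [hεk, hr, if_true, if_false] <;> push_cast <;> ring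
    rw [← hxv]
    exact hlow _ (hmem _)
  have hxsq : ∀ ε : Fin n → Bool, R^2 ≤ ‖x ε‖^2 := fun ε => pow_le_pow_left₀ hR0 (hxlat ε) 2
  have hcross : ∀ (k l : Fin n), k ≠ l → ∑ ε : Fin n → Bool, r (ε k) * r (ε l) = 0 := by
    intro k l hkl
    have hinv : Function.Involutive (fun ε : Fin n → Bool => Function.update ε k (!(ε k))) := by
      intro ε; funext m
      rcases eq_or_ne m k with rfl | hm
      · simp
      · simp [Function.update_of_ne hm]
    have h1 : ∑ ε : Fin n → Bool,
        (r (Function.update ε k (!(ε k)) k) * r (Function.update ε k (!(ε k)) l))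
        = ∑ ε : Fin n → Bool, r (ε k) * r (ε l) :=
      Fintype.sum_bijective _ hinv.bijective _ _ (fun ε => rfl)
    have h2 : ∀ ε : Fin n → Bool,
        r (Function.update ε k (!(ε k)) k) * r (Function.update ε k (!(ε k)) l)
        = -(r (ε k) * r (ε l)) := by
      intro ε
      rw [Function.update_self, Function.update_of_ne (Ne.symm hkl), hrneg]
      ring
    rw [Finset.sum_congr rfl (fun ε _ => h2 ε), Finset.sum_neg_distrib] at h1
    linarith
  have hdiag : ∀ k : Fin n, ∑ ε : Fin n → Bool, r (ε k) * r (ε k)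
      = (Fintype.card (Fin n → Bool) : ℝ) / 4 := by
    intro k
    rw [Finset.sum_congr rfl (fun ε _ => hrr (ε k)), Finset.sum_const, Finset.card_univ,
      nsmul_eq_mul]
    ring
  have hexp : ∀ ε : Fin n → Bool,
      ‖x ε‖^2 = ∑ k, ∑ l, (r (ε k) * r (ε l)) * (inner ℝ (b k) (b l) : ℝ) := by
    intro ε
    rw [← real_inner_self_eq_norm_sq]
    simp only [hx, sum_inner, inner_sum, real_inner_smul_left, real_inner_smul_right]
    exact Finset.sum_congr rfl fun k _ => Finset.sum_congr rfl fun l _ => by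
      rw [real_inner_comm]; ring
  have htotal : ∑ ε : Fin n → Bool, ‖x ε‖^2 = (Fintype.card (Fin n → Bool) : ℝ) * R^2 := by
    rw [Finset.sum_congr rfl (fun ε _ => hexp ε)]
    rw [Finset.sum_comm]
    rw [Finset.sum_congr rfl (fun (k : Fin n) _ => Finset.sum_comm)]
    have hone : ∀ k : Fin n,
        (∑ l, ∑ ε : Fin n → Bool, (r (ε k) * r (ε l)) * (inner ℝ (b k) (b l) : ℝ))
        = (Fintype.card (Fin n → Bool) : ℝ) / 4 * lam^2 := by
      intro k
      rw [Finset.sum_eq_single k]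
      · rw [← Finset.sum_mul, hdiag k, real_inner_self_eq_norm_sq, hnb k]
      · intro l _ hlk
        rw [← Finset.sum_mul, hcross k l (Ne.symm hlk), zero_mul]
      · exact fun hk => absurd (Finset.mem_univ k) hk
    rw [Finset.sum_congr rfl (fun k _ => hone k), Finset.sum_const, Finset.card_univ,
      Fintype.card_fin, nsmul_eq_mul, hR2]
    ring
  have hxeq : ∀ ε : Fin n → Bool, ‖x ε‖^2 = R^2 := by
    have hconst : ∑ _ε : Fin n → Bool, R^2 = (Fintype.card (Fin n → Bool) : ℝ) * R^2 := by
      rw [Finset.sum_const, Finset.card_univ, nsmul_eq_mul]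
    have hsums : ∑ _ε : Fin n → Bool, R^2 = ∑ ε : Fin n → Bool, ‖x ε‖^2 := by
      rw [hconst, htotal]
    intro ε
    exact ((Finset.sum_eq_sum_iff_of_le (fun ε _ => hxsq ε)).mp hsums ε (Finset.mem_univ ε)).symm
  have hupd : ∀ (ε : Fin n → Bool) (k : Fin n), ε k = true →
      x (Function.update ε k false) = x ε - b k := by
    intro ε k hk
    have hsub : x ε - x (Function.update ε k false) = b k := by
      simp only [hx]
      rw [← Finset.sum_sub_distrib]
      rw [Finset.sum_congr rfl (fun m _ => (sub_smul (r (ε m)) (r (Function.update ε k false m)) (b m)).symm)]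
      rw [Finset.sum_eq_single k]
      · rw [Function.update_self, hk]
        norm_num [hr]
      · intro m _ hmk
        rw [Function.update_of_ne hmk]
        simp
      · exact fun hk' => absurd (Finset.mem_univ k) hk'
    rw [← hsub, sub_sub_cancel]
  intro i j hij
  have e1 : x (Function.update (fun _ => true) i false) = x (fun _ => true) - b i :=
    hupd _ i rfl
  have e2 : x (Function.update (fun _ => true) j false) = x (fun _ => true) - b j :=
    hupd _ j rfl
  have e3 : x (Function.update (Function.update (fun _ => true) i false) j false)
      = x (fun _ => true) - b i - b j := by
    rw [hupd _ j (by rw [Function.update_of_ne (Ne.symm hij)]), e1]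
  set X := x (fun _ : Fin n => true) with hX
  have q0 : ‖X‖^2 = R^2 := hxeq _
  have q1 : ‖X - b i‖^2 = R^2 := by rw [← e1]; exact hxeq _
  have q2 : ‖X - b j‖^2 = R^2 := by rw [← e2]; exact hxeq _
  have q3 : ‖X - (b i + b j)‖^2 = R^2 := by rw [← sub_sub, ← e3]; exact hxeq _
  have exp1 : ‖X - b i‖^2 = ‖X‖^2 - 2 * (inner ℝ X (b i) : ℝ) + ‖b i‖^2 :=
    norm_sub_sq_real _ _
  have exp2 : ‖X - b j‖^2 = ‖X‖^2 - 2 * (inner ℝ X (b j) : ℝ) + ‖b j‖^2 :=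
    norm_sub_sq_real _ _
  have exp3 : ‖X - (b i + b j)‖^2 = ‖X‖^2 - 2 * (inner ℝ X (b i + b j) : ℝ) + ‖b i + b j‖^2 :=
    norm_sub_sq_real _ _
  have expadd : ‖b i + b j‖^2 = ‖b i‖^2 + 2 * (inner ℝ (b i) (b j) : ℝ) + ‖b j‖^2 :=
    norm_add_sq_real _ _
  have hia : (inner ℝ X (b i + b j) : ℝ) = (inner ℝ X (b i) : ℝ) + (inner ℝ X (b j) : ℝ) :=
    inner_add_right _ _ _
  linarith
end

section
/- Every full-rank lattice in ℝ² with the Euclidean norm is standard: it has a ℤ-basis b₁, b₂ with ‖b₁‖₂ = λ₁ and ‖b₂‖₂ = λ₂. -/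
open Submodule Metric Module

abbrev E2 := EuclideanSpace ℝ (Fin 2)

lemma aux_finite (L : Submodule ℤ E2) [DiscreteTopology L] (R : ℝ) :
    ((L : Set E2) ∩ Metric.closedBall 0 R).Finite := by
  haveI : DiscreteTopology L.toAddSubgroup := ‹DiscreteTopology L›
  rw [Set.inter_comm]
  exact Metric.finite_isBounded_inter_isClosed (s := (L : Set E2))
    (SetLike.isDiscrete_iff_discreteTopology.2 ‹DiscreteTopology L›) Metric.isBounded_closedBall (AddSubgroup.isClosed_of_discrete (H := L.toAddSubgroup))

-- existence of a shortest nonzero vector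
lemma aux_min1 (L : Submodule ℤ E2) [DiscreteTopology L] {v : E2} (hv : v ∈ L) (hv0 : v ≠ 0) :
    ∃ c₁ ∈ L, c₁ ≠ 0 ∧ ∀ x ∈ L, x ≠ 0 → ‖c₁‖ ≤ ‖x‖ := by
  set S : Set E2 := ((L : Set E2) ∩ Metric.closedBall 0 ‖v‖) \ {0} with hS
  have hfin : S.Finite := ((aux_finite L ‖v‖).subset Set.diff_subset)
  have hne : S.Nonempty := ⟨v, ⟨⟨hv, by simp⟩, hv0⟩⟩
  obtain ⟨c₁, hc₁S, hmin⟩ := Set.exists_min_image S norm hfin hne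
  refine ⟨c₁, hc₁S.1.1, hc₁S.2, ?_⟩
  intro x hx hx0
  rcases le_total ‖x‖ ‖v‖ with h | h
  · exact hmin x ⟨⟨hx, by simpa using h⟩, hx0⟩
  · calc ‖c₁‖ ≤ ‖v‖ := by simpa using hc₁S.1.2
      _ ≤ ‖x‖ := h

-- existence of a shortest vector outside a line
lemma aux_min2 (L : Submodule ℤ E2) [DiscreteTopology L] (c₁ : E2)
    {v : E2} (hv : v ∈ L) (hv0 : v ∉ (Submodule.span ℝ {c₁} : Set E2)) :
    ∃ c₂ ∈ L, c₂ ∉ (Submodule.span ℝ {c₁} : Set E2) ∧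
      ∀ x ∈ L, x ∉ (Submodule.span ℝ {c₁} : Set E2) → ‖c₂‖ ≤ ‖x‖ := by
  set S : Set E2 := ((L : Set E2) ∩ Metric.closedBall 0 ‖v‖) \ (Submodule.span ℝ {c₁} : Set E2)
  have hfin : S.Finite := ((aux_finite L ‖v‖).subset Set.diff_subset)
  have hne : S.Nonempty := ⟨v, ⟨⟨hv, by simp⟩, hv0⟩⟩
  obtain ⟨c₂, hc₂S, hmin⟩ := Set.exists_min_image S norm hfin hne
  refine ⟨c₂, hc₂S.1.1, hc₂S.2, ?_⟩
  intro x hx hx0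
  rcases le_total ‖x‖ ‖v‖ with h | h
  · exact hmin x ⟨⟨hx, by simpa using h⟩, hx0⟩
  · calc ‖c₂‖ ≤ ‖v‖ := by simpa using hc₂S.1.2
      _ ≤ ‖x‖ := h


-- key rounding lemma: the two successive minimal vectors generate the lattice
lemma aux_span (L : Submodule ℤ E2) {c₁ c₂ : E2}
    (hc₁L : c₁ ∈ L) (hc₁0 : c₁ ≠ 0)
    (hmin1 : ∀ x ∈ L, x ≠ 0 → ‖c₁‖ ≤ ‖x‖)
    (hc₂L : c₂ ∈ L) (hc₂sp : c₂ ∉ (Submodule.span ℝ {c₁} : Set E2))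
    (hmin2 : ∀ x ∈ L, x ∉ (Submodule.span ℝ {c₁} : Set E2) → ‖c₂‖ ≤ ‖x‖)
    (hindep : LinearIndependent ℝ ![c₁, c₂]) :
    Submodule.span ℤ (Set.range ![c₁, c₂]) = L := by
  have hc₂0 : c₂ ≠ 0 := fun h => hc₂sp (h ▸ (Submodule.span ℝ {c₁}).zero_mem)
  have hc12 : ‖c₁‖ ≤ ‖c₂‖ := hmin1 c₂ hc₂L hc₂0
  have hc1pos : (0:ℝ) < ‖c₁‖ := norm_pos_iff.2 hc₁0
  have hc2pos : (0:ℝ) < ‖c₂‖ := norm_pos_iff.2 hc₂0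
  apply le_antisymm
  · rw [Submodule.span_le]
    rintro x ⟨i, rfl⟩
    fin_cases i <;> simpa using (by first | exact hc₁L | exact hc₂L)
  · intro x hx
    -- real coordinates of x w.r.t. the basis (c₁, c₂)
    have hcard : Fintype.card (Fin 2) = finrank ℝ E2 := by simp
    set B := basisOfLinearIndependentOfCardEqFinrank hindep hcard with hB
    have hB0 : B 0 = c₁ := by
      rw [hB, coe_basisOfLinearIndependentOfCardEqFinrank]; rfl
    have hB1 : B 1 = c₂ := by
      rw [hB, coe_basisOfLinearIndependentOfCardEqFinrank]; rfl
    set α := B.repr x 0 with hα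
    set β := B.repr x 1 with hβ
    have hxeq : x = α • c₁ + β • c₂ := by
      conv_lhs => rw [← B.sum_repr x]
      rw [Fin.sum_univ_two, hB0, hB1]
    set m : ℤ := round α
    set n : ℤ := round β
    set y : E2 := x - m • c₁ - n • c₂ with hy
    have hyL : y ∈ L := sub_mem (sub_mem hx (zsmul_mem hc₁L m)) (zsmul_mem hc₂L n)
    have hyeq : y = (α - m) • c₁ + (β - n) • c₂ := by
      rw [hy, hxeq, ← Int.cast_smul_eq_zsmul ℝ m c₁, ← Int.cast_smul_eq_zsmul ℝ n c₂]
      module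
    have hαb : |α - m| ≤ 1/2 := abs_sub_round α
    have hβb : |β - n| ≤ 1/2 := abs_sub_round β
    -- show β - n = 0
    have hβ0 : β - (n:ℝ) = 0 := by
      by_contra hβn
      have hy_not : y ∉ (Submodule.span ℝ {c₁} : Set E2) := by
        intro h
        obtain ⟨t, ht⟩ := Submodule.mem_span_singleton.1 h
        apply hc₂sp
        refine Submodule.mem_span_singleton.2 ⟨(β - n)⁻¹ * (t - (α - m)), ?_⟩
        have key : (β - (n:ℝ)) • c₂ = (t - (α - m)) • c₁ := by
          linear_combination (norm := module) (-1 : ℝ) • (ht.trans hyeq)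
        rw [mul_smul, ← key, inv_smul_smul₀ hβn]
      have h1 : ‖c₂‖ ≤ ‖y‖ := hmin2 y hyL hy_not
      have h2 : ‖y‖ ≤ ‖(α - (m:ℝ)) • c₁‖ + ‖(β - (n:ℝ)) • c₂‖ := by
        rw [hyeq]; exact norm_add_le _ _
      have h3 : ‖(α - (m:ℝ)) • c₁‖ = |α - m| * ‖c₁‖ := by rw [norm_smul, Real.norm_eq_abs]
      have h4 : ‖(β - (n:ℝ)) • c₂‖ = |β - n| * ‖c₂‖ := by rw [norm_smul, Real.norm_eq_abs]
      have h5 : ‖(α - (m:ℝ)) • c₁‖ ≤ ‖c₁‖ / 2 := by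
        rw [h3]; nlinarith [abs_nonneg (α - (m:ℝ))]
      have h6 : ‖(β - (n:ℝ)) • c₂‖ ≤ ‖c₂‖ / 2 := by
        rw [h4]; nlinarith [abs_nonneg (β - (n:ℝ))]
      -- all inequalities are forced to be equalities
      have e1 : ‖y‖ = ‖(α - (m:ℝ)) • c₁‖ + ‖(β - (n:ℝ)) • c₂‖ := by linarith
      have hupos : (0:ℝ) < ‖(α - (m:ℝ)) • c₁‖ := by linarith
      have hu0 : (α - (m:ℝ)) • c₁ ≠ 0 := norm_pos_iff.1 hupos
      have hv0 : (β - (n:ℝ)) • c₂ ≠ 0 := smul_ne_zero hβn hc₂0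
      have hray : SameRay ℝ ((α - (m:ℝ)) • c₁) ((β - (n:ℝ)) • c₂) := by
        rw [sameRay_iff_norm_add]
        rw [hyeq] at e1; exact e1
      obtain ⟨r, s, hr, hs, hrs⟩ := hray.exists_pos hu0 hv0
      apply hc₂sp
      refine Submodule.mem_span_singleton.2 ⟨(s * (β - n))⁻¹ * (r * (α - m)), ?_⟩
      have hs' : s * (β - (n:ℝ)) ≠ 0 := mul_ne_zero (ne_of_gt hs) hβn
      have key : (s * (β - (n:ℝ))) • c₂ = (r * (α - (m:ℝ))) • c₁ := by
        rw [mul_smul, mul_smul, ← hrs]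
      rw [mul_smul, ← key, inv_smul_smul₀ hs']
    -- now y is a multiple of c₁ shorter than c₁, hence 0
    have hyeq2 : y = (α - m) • c₁ := by rw [hyeq, hβ0, zero_smul, add_zero]
    have hy0 : y = 0 := by
      by_contra hy0
      have := hmin1 y hyL hy0
      have hn : ‖y‖ = |α - m| * ‖c₁‖ := by rw [hyeq2, norm_smul, Real.norm_eq_abs]
      nlinarith [abs_nonneg (α - (m:ℝ))]
    have hxy : x = m • c₁ + n • c₂ := by
      have : x - m • c₁ - n • c₂ = 0 := hy0
      linear_combination (norm := module) this
    rw [hxy]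
    have h1 : c₁ ∈ Submodule.span ℤ (Set.range ![c₁, c₂]) :=
      Submodule.subset_span ⟨0, rfl⟩
    have h2 : c₂ ∈ Submodule.span ℤ (Set.range ![c₁, c₂]) :=
      Submodule.subset_span ⟨1, rfl⟩
    exact add_mem (zsmul_mem h1 m) (zsmul_mem h2 n)


lemma aux_set1 (L : Submodule ℤ E2) {c₁ : E2} (hc₁L : c₁ ∈ L) (hc₁0 : c₁ ≠ 0)
    (hmin1 : ∀ x ∈ L, x ≠ 0 → ‖c₁‖ ≤ ‖x‖) :
    {r : ℝ | 1 ≤ finrank ℝ (Submodule.span ℝ ((L : Set E2) ∩ Metric.closedBall 0 r))}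
      = Set.Ici ‖c₁‖ := by
  ext r
  simp only [Set.mem_setOf_eq, Set.mem_Ici]
  constructor
  · intro h
    by_contra hr
    push_neg at hr
    have hsub : (L : Set E2) ∩ Metric.closedBall 0 r ⊆ (↑(⊥ : Submodule ℝ E2) : Set E2) := by
      rintro z ⟨hz, hzb⟩
      rw [Metric.mem_closedBall, dist_zero_right] at hzb
      simp only [Submodule.bot_coe, Set.mem_singleton_iff]
      by_contra hz0
      exact absurd (lt_of_le_of_lt hzb hr) (not_lt.2 (hmin1 z hz hz0))
    have hle : Submodule.span ℝ ((L : Set E2) ∩ Metric.closedBall 0 r) = ⊥ :=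
      le_bot_iff.1 (Submodule.span_le.2 hsub)
    rw [hle, finrank_bot] at h
    omega
  · intro h
    have hc : c₁ ∈ (L : Set E2) ∩ Metric.closedBall 0 r :=
      ⟨hc₁L, by rw [Metric.mem_closedBall, dist_zero_right]; exact h⟩
    have h1 : Submodule.span ℝ {c₁} ≤
        Submodule.span ℝ ((L : Set E2) ∩ Metric.closedBall 0 r) :=
      Submodule.span_mono (Set.singleton_subset_iff.2 hc)
    calc (1:ℕ) = finrank ℝ (Submodule.span ℝ {c₁}) := (finrank_span_singleton hc₁0).symm
      _ ≤ _ := Submodule.finrank_mono h1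

lemma aux_set2 (L : Submodule ℤ E2) {c₁ c₂ : E2} (hc₁L : c₁ ∈ L) (hc₂L : c₂ ∈ L)
    (h12 : ‖c₁‖ ≤ ‖c₂‖)
    (hc₂sp : c₂ ∉ (Submodule.span ℝ {c₁} : Set E2))
    (hmin2 : ∀ x ∈ L, x ∉ (Submodule.span ℝ {c₁} : Set E2) → ‖c₂‖ ≤ ‖x‖)
    (hindep : LinearIndependent ℝ ![c₁, c₂]) :
    {r : ℝ | 2 ≤ finrank ℝ (Submodule.span ℝ ((L : Set E2) ∩ Metric.closedBall 0 r))}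
      = Set.Ici ‖c₂‖ := by
  ext r
  simp only [Set.mem_setOf_eq, Set.mem_Ici]
  constructor
  · intro h
    by_contra hr
    push_neg at hr
    have hsub : (L : Set E2) ∩ Metric.closedBall 0 r ⊆ (Submodule.span ℝ {c₁} : Set E2) := by
      rintro z ⟨hz, hzb⟩
      rw [Metric.mem_closedBall, dist_zero_right] at hzb
      by_contra hz0
      exact absurd (lt_of_le_of_lt hzb hr) (not_lt.2 (hmin2 z hz hz0))
    have hle : Submodule.span ℝ ((L : Set E2) ∩ Metric.closedBall 0 r) ≤
        Submodule.span ℝ {c₁} := by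
      rw [Submodule.span_le]; exact hsub
    have hc₁0 : c₁ ≠ 0 := by
      have := hindep.ne_zero 0; simpa using this
    have h2 := Submodule.finrank_mono (M := E2) hle
    rw [finrank_span_singleton hc₁0] at h2
    omega
  · intro h
    have hsub : Set.range ![c₁, c₂] ⊆ (L : Set E2) ∩ Metric.closedBall 0 r := by
      rintro z ⟨i, rfl⟩
      fin_cases i
      · exact ⟨hc₁L, by rw [Metric.mem_closedBall, dist_zero_right]; exact le_trans h12 h⟩
      · exact ⟨hc₂L, by rw [Metric.mem_closedBall, dist_zero_right]; exact h⟩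
    calc (2:ℕ) = finrank ℝ (Submodule.span ℝ (Set.range ![c₁, c₂])) := by
          rw [finrank_span_eq_card hindep]; simp
      _ ≤ _ := Submodule.finrank_mono (Submodule.span_mono hsub)



/-- Every full-rank lattice in ℝ² is standard: some ℤ-basis achieves the successive minima. -/
theorem stmt_9 (b : Fin 2 → EuclideanSpace ℝ (Fin 2)) (hli : LinearIndependent ℝ b) :
    ∃ c : Fin 2 → EuclideanSpace ℝ (Fin 2),
      LinearIndependent ℝ c ∧
      Submodule.span ℤ (Set.range c) = Submodule.span ℤ (Set.range b) ∧
      ∀ i : Fin 2, ‖c i‖ =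
        succMin 2 ((Submodule.span ℤ (Set.range b) :
          Submodule ℤ (EuclideanSpace ℝ (Fin 2))) : Set _) (i + 1) := by
  classical
  set L : Submodule ℤ E2 := Submodule.span ℤ (Set.range b) with hLdef
  have hcard : Fintype.card (Fin 2) = finrank ℝ E2 := by simp
  set Bb := basisOfLinearIndependentOfCardEqFinrank hli hcard with hBbdef
  have hBb : Set.range ⇑Bb = Set.range b := by
    rw [hBbdef, coe_basisOfLinearIndependentOfCardEqFinrank]
  haveI hdisc : DiscreteTopology L := by
    rw [hLdef, ← hBb]; infer_instance
  have hb0L : b 0 ∈ L := Submodule.subset_span (Set.mem_range_self 0)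
  have hb0ne : b 0 ≠ 0 := hli.ne_zero 0
  obtain ⟨c₁, hc₁L, hc₁0, hmin1⟩ := aux_min1 L hb0L hb0ne
  have hex : ∃ v ∈ L, v ∉ (Submodule.span ℝ {c₁} : Set E2) := by
    by_contra hcon
    push_neg at hcon
    have hle : Submodule.span ℝ (Set.range b) ≤ Submodule.span ℝ {c₁} := by
      rw [Submodule.span_le]
      rintro z ⟨i, rfl⟩
      exact hcon _ (Submodule.subset_span (Set.mem_range_self i))
    have h2 := Submodule.finrank_mono (M := E2) hle
    rw [finrank_span_eq_card hli, finrank_span_singleton hc₁0] at h2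
    simp at h2
  obtain ⟨v, hvL, hvsp⟩ := hex
  obtain ⟨c₂, hc₂L, hc₂sp, hmin2⟩ := aux_min2 L c₁ hvL hvsp
  have hc₂0 : c₂ ≠ 0 := by
    intro h0; apply hc₂sp; rw [h0]; exact Submodule.zero_mem _
  have h12 : ‖c₁‖ ≤ ‖c₂‖ := hmin1 c₂ hc₂L hc₂0
  have hindep : LinearIndependent ℝ ![c₁, c₂] := by
    rw [linearIndependent_fin2]
    refine ⟨by simpa using hc₂0, fun a ha => ?_⟩
    simp only [Matrix.cons_val_one, Matrix.head_cons, Matrix.cons_val_zero] at ha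
    have ha0 : a ≠ 0 := by rintro rfl; rw [zero_smul] at ha; exact hc₁0 ha.symm
    apply hc₂sp
    exact Submodule.mem_span_singleton.2 ⟨a⁻¹, by rw [← ha, inv_smul_smul₀ ha0]⟩
  refine ⟨![c₁, c₂], hindep, aux_span L hc₁L hc₁0 hmin1 hc₂L hc₂sp hmin2 hindep, ?_⟩
  intro i
  fin_cases i
  · show ‖c₁‖ = sInf {r : ℝ | 1 ≤ finrank ℝ
      (Submodule.span ℝ ((L : Set E2) ∩ Metric.closedBall 0 r))}
    rw [aux_set1 L hc₁L hc₁0 hmin1, csInf_Ici]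
  · show ‖c₂‖ = sInf {r : ℝ | 2 ≤ finrank ℝ
      (Submodule.span ℝ ((L : Set E2) ∩ Metric.closedBall 0 r))}
    rw [aux_set2 L hc₁L hc₂L h12 hc₂sp hmin2 hindep, csInf_Ici]
end

section
/- Every full-rank lattice in ℝ³ with the Euclidean norm is standard: it has a ℤ-basis b₁, b₂, b₃ with ‖bᵢ‖₂ = λᵢ for i = 1, 2, 3. -/
open scoped RealInnerProductSpace
open Submodule Metric Set Module

section Aux

variable {F : Type*} [NormedAddCommGroup F] [InnerProductSpace ℝ F]

lemma my_expand_norm (u c : F) (t : ℝ) :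
    ‖u + t • c‖ ^ 2 = ‖u‖ ^ 2 + 2 * t * ⟪u, c⟫ + t ^ 2 * ‖c‖ ^ 2 := by
  rw [norm_add_sq_real, real_inner_smul_right, norm_smul, Real.norm_eq_abs, mul_pow, sq_abs]
  ring

lemma my_expand_norm2 (c₁ c₂ : F) (s t : ℝ) :
    ‖s • c₁ + t • c₂‖ ^ 2 = s ^ 2 * ‖c₁‖ ^ 2 + 2 * s * t * ⟪c₁, c₂⟫ + t ^ 2 * ‖c₂‖ ^ 2 := by
  rw [my_expand_norm, real_inner_smul_left, norm_smul, Real.norm_eq_abs, mul_pow, sq_abs]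
  ring

set_option maxHeartbeats 1000000 in
lemma my_planeScalar (A B e β₁ β₂ : ℝ) (hA : 0 ≤ A) (hB : 0 ≤ B) (he : |e| ≤ A / 2)
    (h1 : |β₁| ≤ 1/2) (h2 : |β₂| ≤ 1/2) :
    ∃ k : ℤ, (β₁ - k) ^ 2 * A + 2 * (β₁ - k) * β₂ * e + β₂ ^ 2 * B ≤
      9/25 * A + 1/4 * B := by
  have hb1 := abs_le.1 h1
  have hb2 := abs_le.1 h2
  have he' := abs_le.1 he
  have hq2 : β₂ ^ 2 ≤ 1/4 := by nlinarith [hb2.1, hb2.2]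
  by_cases hcross : β₁ * β₂ * e ≤ 0
  · refine ⟨0, ?_⟩
    have hq1 : β₁ ^ 2 ≤ 1/4 := by nlinarith [hb1.1, hb1.2]
    push_cast
    nlinarith [mul_nonneg (by linarith : (0:ℝ) ≤ 1/4 - β₁ ^ 2) hA,
      mul_nonneg (by linarith : (0:ℝ) ≤ 1/4 - β₂ ^ 2) hB]
  · push_neg at hcross
    by_cases hsmall : |β₁| ≤ 2/5
    · refine ⟨0, ?_⟩
      have habs : 2 * β₁ * β₂ * e ≤ 2 * |β₁| * |β₂| * |e| := by
        calc 2 * β₁ * β₂ * e ≤ |2 * β₁ * β₂ * e| := le_abs_self _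
        _ = 2 * |β₁| * |β₂| * |e| := by rw [abs_mul, abs_mul, abs_mul, abs_two]
      have hm1 : |β₁| * |β₂| ≤ (2/5) * (1/2) :=
        mul_le_mul hsmall h2 (abs_nonneg _) (by norm_num)
      have hm2 : |β₁| * |β₂| * |e| ≤ (1/5) * (A / 2) :=
        mul_le_mul (by linarith) he (abs_nonneg _) (by norm_num)
      have hqa : β₁ ^ 2 ≤ 4/25 := by
        rw [← sq_abs]; nlinarith [abs_nonneg β₁]
      push_cast
      nlinarith [mul_nonneg (by linarith : (0:ℝ) ≤ 4/25 - β₁ ^ 2) hA,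
        mul_nonneg (by linarith : (0:ℝ) ≤ 1/4 - β₂ ^ 2) hB]
    · push_neg at hsmall
      rcases lt_trichotomy β₁ 0 with hneg | hzero | hpos
      · refine ⟨-1, ?_⟩
        have h2e : β₂ * e < 0 := by
          rcases mul_pos_iff.1 (by rwa [mul_assoc] at hcross) with ⟨h, _⟩ | ⟨_, h⟩
          · linarith
          · exact h
        have hrange : 2/5 < -β₁ := by rw [abs_of_neg hneg] at hsmall; linarith
        have hcross' : 2 * (β₁ + 1) * β₂ * e ≤ 0 := by
          nlinarith [mul_nonneg (by linarith : (0:ℝ) ≤ β₁ + 1)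
            (by linarith : (0:ℝ) ≤ -(β₂ * e))]
        have hqa : (β₁ + 1) ^ 2 ≤ 9/25 := by nlinarith [hb1.1]
        push_cast
        nlinarith [mul_nonneg (by linarith : (0:ℝ) ≤ 9/25 - (β₁ + 1) ^ 2) hA,
          mul_nonneg (by linarith : (0:ℝ) ≤ 1/4 - β₂ ^ 2) hB]
      · exfalso; rw [hzero] at hcross; simp at hcross
      · refine ⟨1, ?_⟩
        have h2e : 0 < β₂ * e := by
          rcases mul_pos_iff.1 (by rwa [mul_assoc] at hcross) with ⟨_, h⟩ | ⟨h, _⟩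
          · exact h
          · linarith
        have hrange : 2/5 < β₁ := by rw [abs_of_pos hpos] at hsmall; linarith
        have hcross' : 2 * (β₁ - 1) * β₂ * e ≤ 0 := by
          nlinarith [mul_nonneg (by linarith : (0:ℝ) ≤ 1 - β₁)
            (by linarith : (0:ℝ) ≤ β₂ * e)]
        have hqa : (β₁ - 1) ^ 2 ≤ 9/25 := by nlinarith [hb1.2]
        push_cast
        nlinarith [mul_nonneg (by linarith : (0:ℝ) ≤ 9/25 - (β₁ - 1) ^ 2) hA,
          mul_nonneg (by linarith : (0:ℝ) ≤ 1/4 - β₂ ^ 2) hB]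

/-- Covering-type bound for a reduced pair: any real point can be translated by
the lattice generated by `c₁, c₂` into a small ball. -/
lemma my_planeBound (c₁ c₂ : F) (hred : |⟪c₁, c₂⟫| ≤ ‖c₁‖ ^ 2 / 2) (t₁ t₂ : ℝ) :
    ∃ n₁ n₂ : ℤ, ‖(t₁ - n₁) • c₁ + (t₂ - n₂) • c₂‖ ^ 2 ≤
      (9 / 25) * ‖c₁‖ ^ 2 + (1 / 4) * ‖c₂‖ ^ 2 := by
  have hA : (0:ℝ) ≤ ‖c₁‖ ^ 2 := by positivity
  have hB : (0:ℝ) ≤ ‖c₂‖ ^ 2 := by positivity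
  obtain ⟨k, hk⟩ := my_planeScalar (‖c₁‖ ^ 2) (‖c₂‖ ^ 2) ⟪c₁, c₂⟫
    (t₁ - round t₁) (t₂ - round t₂) hA hB hred (abs_sub_round t₁) (abs_sub_round t₂)
  refine ⟨round t₁ + k, round t₂, ?_⟩
  have h1 : t₁ - (round t₁ + k : ℤ) = (t₁ - round t₁) - k := by push_cast; ring
  rw [h1, my_expand_norm2]
  calc ((t₁ - round t₁) - k) ^ 2 * ‖c₁‖ ^ 2 +
        2 * ((t₁ - round t₁) - k) * (t₂ - round t₂) * ⟪c₁, c₂⟫ +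
        (t₂ - round t₂) ^ 2 * ‖c₂‖ ^ 2 ≤ 9/25 * ‖c₁‖ ^ 2 + 1/4 * ‖c₂‖ ^ 2 := hk
  _ = (9 / 25) * ‖c₁‖ ^ 2 + (1 / 4) * ‖c₂‖ ^ 2 := by norm_num

/-- The scalar contradiction at the heart of the three-dimensional case. -/
lemma my_scalarContr (U e C δ : ℝ) (hC : 0 < C) (hδ : δ ≠ 0) (hδ2 : |δ| ≤ 1/2)
    (hU : U ≤ (61/100) * C)
    (h1 : C ≤ U + 2 * δ * e + δ ^ 2 * C)
    (h2 : C ≤ U + 2 * (δ - 1) * e + (δ - 1) ^ 2 * C)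
    (h3 : C ≤ U + 2 * (δ + 1) * e + (δ + 1) ^ 2 * C) : False := by
  have hd := abs_le.1 hδ2
  rcases hδ.lt_or_gt with h | h
  · nlinarith [mul_le_mul_of_nonneg_left h1 (by linarith : (0:ℝ) ≤ 1 + δ),
      mul_le_mul_of_nonneg_left h3 (by linarith : (0:ℝ) ≤ -δ), sq_nonneg (δ + 1/2)]
  · nlinarith [mul_le_mul_of_nonneg_left h1 (by linarith : (0:ℝ) ≤ 1 - δ),
      mul_le_mul_of_nonneg_left h2 (by linarith : (0:ℝ) ≤ δ), sq_nonneg (δ - 1/2)]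

lemma my_planeScalar2 (A B e β₀ β₁ : ℝ) (hA : 0 ≤ A) (hAB : A ≤ B) (hB : 0 < B)
    (he : |e| ≤ A / 2) (h0 : |β₀| ≤ 1/2) (h1 : |β₁| ≤ 1/2)
    (hcontr : B ≤ β₀ ^ 2 * A + 2 * β₀ * β₁ * e + β₁ ^ 2 * B) : False := by
  have hb0 := abs_le.1 h0
  have hb1 := abs_le.1 h1
  have habs : 2 * β₀ * β₁ * e ≤ 2 * |β₀| * |β₁| * |e| := by
    calc 2 * β₀ * β₁ * e ≤ |2 * β₀ * β₁ * e| := le_abs_self _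
    _ = 2 * |β₀| * |β₁| * |e| := by rw [abs_mul, abs_mul, abs_mul, abs_two]
  have hm1 : |β₀| * |β₁| ≤ (1/2) * (1/2) := mul_le_mul h0 h1 (abs_nonneg _) (by norm_num)
  have hm2 : |β₀| * |β₁| * |e| ≤ (1/4) * (A / 2) :=
    mul_le_mul (by linarith) he (abs_nonneg _) (by norm_num)
  have hq0 : β₀ ^ 2 ≤ 1/4 := by nlinarith [hb0.1, hb0.2]
  have hq1 : β₁ ^ 2 ≤ 1/4 := by nlinarith [hb1.1, hb1.2]
  nlinarith [mul_nonneg (by linarith : (0:ℝ) ≤ 1/4 - β₀ ^ 2) hA,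
    mul_nonneg (by linarith : (0:ℝ) ≤ 1/4 - β₁ ^ 2) hB.le]

lemma my_exists_norm_min {G : Type*} [NormedAddCommGroup G] (T : Set G) (hne : T.Nonempty)
    (hfin : ∀ r : ℝ, (T ∩ Metric.closedBall 0 r).Finite) :
    ∃ a ∈ T, ∀ v ∈ T, ‖a‖ ≤ ‖v‖ := by
  obtain ⟨t, ht⟩ := hne
  obtain ⟨a, ha, hmin⟩ := Set.exists_min_image _ (fun v => ‖v‖) (hfin ‖t‖)
    ⟨t, ht, by simp [mem_closedBall_zero_iff]⟩
  refine ⟨a, ha.1, fun v hv => ?_⟩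
  by_cases h : ‖v‖ ≤ ‖t‖
  · exact hmin v ⟨hv, mem_closedBall_zero_iff.2 h⟩
  · exact le_trans (hmin t ⟨ht, by simp⟩) (le_of_not_ge h)

end Aux

set_option maxHeartbeats 1000000 in
/-- Every full-rank lattice in ℝ³ is standard: some ℤ-basis achieves the successive minima. -/
theorem stmt_10 (b : Fin 3 → EuclideanSpace ℝ (Fin 3)) (hli : LinearIndependent ℝ b) :
    ∃ c : Fin 3 → EuclideanSpace ℝ (Fin 3),
      LinearIndependent ℝ c ∧
      Submodule.span ℤ (Set.range c) = Submodule.span ℤ (Set.range b) ∧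
      ∀ i : Fin 3, ‖c i‖ =
        succMin 3 ((Submodule.span ℤ (Set.range b) :
          Submodule ℤ (EuclideanSpace ℝ (Fin 3))) : Set _) (i + 1) := by
  classical
  obtain ⟨B₀, rfl⟩ : ∃ B : Basis (Fin 3) ℝ (EuclideanSpace ℝ (Fin 3)), ⇑B = b :=
    ⟨basisOfLinearIndependentOfCardEqFinrank hli (by simp [finrank_euclideanSpace_fin]),
      coe_basisOfLinearIndependentOfCardEqFinrank hli _⟩
  set E := EuclideanSpace ℝ (Fin 3)
  set Λ : Submodule ℤ E := Submodule.span ℤ (Set.range ⇑B₀) with hΛdef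
  -- finiteness of bounded pieces of the lattice
  have hfin : ∀ (T : Set E), T ⊆ (Λ : Set E) → ∀ r : ℝ, (T ∩ Metric.closedBall 0 r).Finite := by
    intro T hT r
    have h1 : ((Metric.closedBall (0:E) r) ∩ (Λ.toAddSubgroup : Set E)).Finite := by
      have : DiscreteTopology Λ.toAddSubgroup := by
        exact inferInstanceAs (DiscreteTopology (Submodule.span ℤ (Set.range ⇑B₀)))
      exact Metric.finite_isBounded_inter_isClosed DiscreteTopology.isDiscrete Metric.isBounded_closedBall
        AddSubgroup.isClosed_of_discrete
    refine h1.subset ?_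
    rintro v ⟨hv1, hv2⟩
    exact ⟨hv2, hT hv1⟩
  -- choose the three successive minimal vectors
  have hb0mem : B₀ 0 ∈ (Λ : Set E) := Submodule.subset_span ⟨0, rfl⟩
  obtain ⟨c₁, hc₁, hmin₁⟩ := my_exists_norm_min {v : E | v ∈ (Λ : Set E) ∧ v ≠ 0}
    ⟨B₀ 0, hb0mem, B₀.ne_zero 0⟩ (fun r => hfin _ (fun v hv => hv.1) r)
  obtain ⟨hc₁Λ, hc₁0⟩ := hc₁
  set P₁ : Submodule ℝ E := Submodule.span ℝ {c₁} with hP₁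
  have hfr1 : finrank ℝ P₁ ≤ 1 := by
    have h := finrank_range_le_card (R := ℝ) ![c₁]
    rw [Matrix.range_cons_empty] at h
    simpa [Set.finrank, hP₁] using h
  have hex₂ : ∃ i, B₀ i ∉ P₁ := by
    by_contra h
    push_neg at h
    have h1 : (⊤ : Submodule ℝ E) ≤ P₁ := by
      rw [← B₀.span_eq]; exact Submodule.span_le.2 (Set.range_subset_iff.2 h)
    have h2 := Submodule.finrank_mono h1
    rw [finrank_top, finrank_euclideanSpace_fin] at h2
    omega
  obtain ⟨i₂, hi₂⟩ := hex₂
  obtain ⟨c₂, hc₂, hmin₂⟩ := my_exists_norm_min {v : E | v ∈ (Λ : Set E) ∧ v ∉ P₁}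
    ⟨B₀ i₂, Submodule.subset_span ⟨i₂, rfl⟩, hi₂⟩ (fun r => hfin _ (fun v hv => hv.1) r)
  obtain ⟨hc₂Λ, hc₂P⟩ := hc₂
  set P₂ : Submodule ℝ E := Submodule.span ℝ {c₁, c₂} with hP₂
  have hP₁₂ : P₁ ≤ P₂ :=
    Submodule.span_mono (Set.singleton_subset_iff.2 (Set.mem_insert _ _))
  have hfr2 : finrank ℝ P₂ ≤ 2 := by
    have h := finrank_range_le_card (R := ℝ) ![c₁, c₂]
    rw [Matrix.range_cons, Matrix.range_cons_empty, Set.singleton_union] at h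
    simpa [Set.finrank, hP₂] using h
  have hex₃ : ∃ i, B₀ i ∉ P₂ := by
    by_contra h
    push_neg at h
    have h1 : (⊤ : Submodule ℝ E) ≤ P₂ := by
      rw [← B₀.span_eq]; exact Submodule.span_le.2 (Set.range_subset_iff.2 h)
    have h2 := Submodule.finrank_mono h1
    rw [finrank_top, finrank_euclideanSpace_fin] at h2
    omega
  obtain ⟨i₃, hi₃⟩ := hex₃
  obtain ⟨c₃, hc₃, hmin₃⟩ := my_exists_norm_min {v : E | v ∈ (Λ : Set E) ∧ v ∉ P₂}
    ⟨B₀ i₃, Submodule.subset_span ⟨i₃, rfl⟩, hi₃⟩ (fun r => hfin _ (fun v hv => hv.1) r)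
  obtain ⟨hc₃Λ, hc₃P⟩ := hc₃
  -- basic facts
  have hc₁P₁ : c₁ ∈ P₁ := Submodule.subset_span rfl
  have hc₁P₂ : c₁ ∈ P₂ := Submodule.subset_span (by simp)
  have hc₂P₂ : c₂ ∈ P₂ := Submodule.subset_span (by simp)
  have hc₂0 : c₂ ≠ 0 := fun h => hc₂P (h ▸ zero_mem P₁)
  have hc₃0 : c₃ ≠ 0 := fun h => hc₃P (h ▸ zero_mem P₂)
  have h01 : ‖c₁‖ ≤ ‖c₂‖ := hmin₁ c₂ ⟨hc₂Λ, hc₂0⟩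
  have h12 : ‖c₂‖ ≤ ‖c₃‖ := hmin₂ c₃ ⟨hc₃Λ, fun h => hc₃P (hP₁₂ h)⟩
  have hc₁pos : 0 < ‖c₁‖ := norm_pos_iff.2 hc₁0
  have hc₂pos : 0 < ‖c₂‖ := norm_pos_iff.2 hc₂0
  have hc₃pos : 0 < ‖c₃‖ := norm_pos_iff.2 hc₃0
  -- the pair (c₁, c₂) is reduced
  have hred : |⟪c₁, c₂⟫| ≤ ‖c₁‖ ^ 2 / 2 := by
    have hplus : ‖c₂‖ ≤ ‖c₂ + c₁‖ := hmin₂ _ ⟨add_mem hc₂Λ hc₁Λ, fun h => hc₂P (by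
      have := sub_mem h hc₁P₁; simpa using this)⟩
    have hminus : ‖c₂‖ ≤ ‖c₂ - c₁‖ := hmin₂ _ ⟨sub_mem hc₂Λ hc₁Λ, fun h => hc₂P (by
      have := add_mem h hc₁P₁; simpa using this)⟩
    have h1 : ‖c₂‖ ^ 2 ≤ ‖c₂ + c₁‖ ^ 2 := pow_le_pow_left₀ (norm_nonneg _) hplus 2
    have h2 : ‖c₂‖ ^ 2 ≤ ‖c₂ - c₁‖ ^ 2 := pow_le_pow_left₀ (norm_nonneg _) hminus 2
    rw [norm_add_sq_real, real_inner_comm c₁ c₂] at h1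
    rw [norm_sub_sq_real, real_inner_comm c₁ c₂] at h2
    rw [abs_le]
    constructor <;> [linarith; linarith]
  -- linear independence of the chosen triple
  have hcli : LinearIndependent ℝ ![c₁, c₂, c₃] := by
    refine Fintype.linearIndependent_iff.2 fun g hg => ?_
    rw [Fin.sum_univ_three] at hg
    simp only [Matrix.cons_val_zero, Matrix.cons_val_one, Matrix.head_cons,
      Matrix.cons_val_two, Matrix.tail_cons] at hg
    have hg2 : g 2 = 0 := by
      by_contra h2
      apply hc₃P
      have h3 : g 2 • c₃ = -(g 0 • c₁ + g 1 • c₂) := by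
        rw [add_comm (g 0 • c₁ + g 1 • c₂) (g 2 • c₃)] at hg
        exact add_eq_zero_iff_eq_neg.1 hg
      have hmem : g 2 • c₃ ∈ P₂ := by
        rw [h3]
        exact neg_mem (add_mem (P₂.smul_mem _ hc₁P₂) (P₂.smul_mem _ hc₂P₂))
      have := P₂.smul_mem (g 2)⁻¹ hmem
      rwa [smul_smul, inv_mul_cancel₀ h2, one_smul] at this
    rw [hg2, zero_smul, add_zero] at hg
    have hg1 : g 1 = 0 := by
      by_contra h1
      apply hc₂P
      have h3 : g 1 • c₂ = -(g 0 • c₁) := by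
        rw [add_comm (g 0 • c₁) (g 1 • c₂)] at hg
        exact add_eq_zero_iff_eq_neg.1 hg
      have hmem : g 1 • c₂ ∈ P₁ := by
        rw [h3]
        exact neg_mem (P₁.smul_mem _ hc₁P₁)
      have := P₁.smul_mem (g 1)⁻¹ hmem
      rwa [smul_smul, inv_mul_cancel₀ h1, one_smul] at this
    rw [hg1, zero_smul, add_zero] at hg
    have hg0 : g 0 = 0 := by
      rcases smul_eq_zero.1 hg with h | h
      · exact h
      · exact absurd h hc₁0
    intro j
    fin_cases j
    · exact hg0
    · exact hg1
    · exact hg2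
  set c : Fin 3 → E := ![c₁, c₂, c₃] with hcdef
  have hc0 : c 0 = c₁ := rfl
  have hc1 : c 1 = c₂ := rfl
  have hc2 : c 2 = c₃ := rfl
  have hcΛ : ∀ i, c i ∈ Λ := by
    intro i
    fin_cases i
    · exact hc₁Λ
    · exact hc₂Λ
    · exact hc₃Λ
  obtain ⟨C, hC⟩ : ∃ C : Basis (Fin 3) ℝ E, ⇑C = c :=
    ⟨basisOfLinearIndependentOfCardEqFinrank hcli
        (by rw [Fintype.card_fin]; exact finrank_euclideanSpace_fin.symm),
      coe_basisOfLinearIndependentOfCardEqFinrank _ _⟩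
  -- key claim : every lattice point is an integral combination of c₁, c₂, c₃
  have hnm : ∀ (s t δ : ℝ), δ ≠ 0 → s • c₁ + t • c₂ + δ • c₃ ∉ P₂ := by
    intro s t δ hδ hmem
    apply hc₃P
    have h1 : s • c₁ + t • c₂ ∈ P₂ := add_mem (P₂.smul_mem _ hc₁P₂) (P₂.smul_mem _ hc₂P₂)
    have h2 : δ • c₃ ∈ P₂ := by
      have := sub_mem hmem h1
      simpa using this
    have := P₂.smul_mem δ⁻¹ h2
    rwa [smul_smul, inv_mul_cancel₀ hδ, one_smul] at this
  have key : ∀ x, x ∈ Λ → x ∈ Submodule.span ℤ (Set.range c) := by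
    intro x hx
    have hxsum : x = ∑ i, (C.repr x i) • c i := by
      conv_lhs => rw [← C.sum_repr x]
      rw [hC]
    set m : Fin 3 → ℤ := fun i => round (C.repr x i) with hm
    set β : Fin 3 → ℝ := fun i => C.repr x i - m i with hβdef
    have hβ : ∀ i, |β i| ≤ 1/2 := fun i => abs_sub_round _
    set y : E := β 0 • c₁ + β 1 • c₂ + β 2 • c₃ with hy
    have hxy : x = y + ((m 0 : ℝ) • c₁ + (m 1 : ℝ) • c₂ + (m 2 : ℝ) • c₃) := by
      conv_lhs => rw [hxsum]
      rw [Fin.sum_univ_three, hc0, hc1, hc2, hy]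
      simp only [hβdef]
      module
    have hyΛ : y ∈ Λ := by
      have h : y = x - ((m 0 : ℝ) • c₁ + (m 1 : ℝ) • c₂ + (m 2 : ℝ) • c₃) := by
        rw [hxy]; abel
      rw [h]
      refine sub_mem hx (add_mem (add_mem ?_ ?_) ?_) <;>
        rw [Int.cast_smul_eq_zsmul ℝ]
      · exact Λ.smul_mem _ hc₁Λ
      · exact Λ.smul_mem _ hc₂Λ
      · exact Λ.smul_mem _ hc₃Λ
    have hβ2 : β 2 = 0 := by
      by_contra h2
      obtain ⟨n₁, n₂, hu⟩ := my_planeBound c₁ c₂ hred (β 0) (β 1)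
      set u : E := (β 0 - ↑n₁) • c₁ + (β 1 - ↑n₂) • c₂ with hudef
      have hw1Λ : u + β 2 • c₃ ∈ Λ := by
        have h : u + β 2 • c₃ = y - ((n₁ : ℝ) • c₁ + (n₂ : ℝ) • c₂) := by
          rw [hy, hudef]; module
        rw [h]
        refine sub_mem hyΛ (add_mem ?_ ?_) <;> rw [Int.cast_smul_eq_zsmul ℝ]
        · exact Λ.smul_mem _ hc₁Λ
        · exact Λ.smul_mem _ hc₂Λ
      have hw2Λ : u + (β 2 - 1) • c₃ ∈ Λ := by
        have h : u + (β 2 - 1) • c₃ = (u + β 2 • c₃) - c₃ := by module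
        rw [h]; exact sub_mem hw1Λ hc₃Λ
      have hw3Λ : u + (β 2 + 1) • c₃ ∈ Λ := by
        have h : u + (β 2 + 1) • c₃ = (u + β 2 • c₃) + c₃ := by module
        rw [h]; exact add_mem hw1Λ hc₃Λ
      have hβ2' := abs_le.1 (hβ 2)
      have hnot1 : u + β 2 • c₃ ∉ P₂ := by rw [hudef]; exact hnm _ _ _ h2
      have hnot2 : u + (β 2 - 1) • c₃ ∉ P₂ := by
        rw [hudef]
        refine hnm _ _ _ ?_
        intro h
        rw [sub_eq_zero] at h
        have hq := hβ2'.2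
        rw [h] at hq
        norm_num at hq
      have hnot3 : u + (β 2 + 1) • c₃ ∉ P₂ := by
        rw [hudef]
        refine hnm _ _ _ ?_
        intro h
        rw [add_eq_zero_iff_eq_neg] at h
        have hq := hβ2'.1
        rw [h] at hq
        norm_num at hq
      have e1 : ‖c₃‖ ^ 2 ≤ ‖u + β 2 • c₃‖ ^ 2 :=
        pow_le_pow_left₀ (norm_nonneg _) (hmin₃ _ ⟨hw1Λ, hnot1⟩) 2
      have e2 : ‖c₃‖ ^ 2 ≤ ‖u + (β 2 - 1) • c₃‖ ^ 2 :=
        pow_le_pow_left₀ (norm_nonneg _) (hmin₃ _ ⟨hw2Λ, hnot2⟩) 2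
      have e3 : ‖c₃‖ ^ 2 ≤ ‖u + (β 2 + 1) • c₃‖ ^ 2 :=
        pow_le_pow_left₀ (norm_nonneg _) (hmin₃ _ ⟨hw3Λ, hnot3⟩) 2
      rw [my_expand_norm] at e1 e2 e3
      have hU : ‖u‖ ^ 2 ≤ (61/100) * ‖c₃‖ ^ 2 := by
        have hA3 : ‖c₁‖ ^ 2 ≤ ‖c₃‖ ^ 2 := pow_le_pow_left₀ (norm_nonneg _) (h01.trans h12) 2
        have hB3 : ‖c₂‖ ^ 2 ≤ ‖c₃‖ ^ 2 := pow_le_pow_left₀ (norm_nonneg _) h12 2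
        linarith
      exact my_scalarContr (‖u‖ ^ 2) ⟪u, c₃⟫ (‖c₃‖ ^ 2) (β 2) (pow_pos hc₃pos 2)
        h2 (hβ 2) hU e1 e2 e3
    have hβ1 : β 1 = 0 := by
      by_contra h1
      have hyy : y = β 0 • c₁ + β 1 • c₂ := by rw [hy, hβ2, zero_smul, add_zero]
      have hyP : y ∉ P₁ := by
        intro hmem
        apply hc₂P
        rw [hyy] at hmem
        have h3 : β 1 • c₂ ∈ P₁ := by
          have := sub_mem hmem (P₁.smul_mem (β 0) hc₁P₁)
          simpa using this
        have := P₁.smul_mem (β 1)⁻¹ h3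
        rwa [smul_smul, inv_mul_cancel₀ h1, one_smul] at this
      have hge : ‖c₂‖ ≤ ‖y‖ := hmin₂ y ⟨hyΛ, hyP⟩
      have hge2 : ‖c₂‖ ^ 2 ≤ ‖y‖ ^ 2 := pow_le_pow_left₀ (norm_nonneg _) hge 2
      rw [hyy, my_expand_norm2] at hge2
      have hAB : ‖c₁‖ ^ 2 ≤ ‖c₂‖ ^ 2 := pow_le_pow_left₀ (norm_nonneg _) h01 2
      exact my_planeScalar2 (‖c₁‖ ^ 2) (‖c₂‖ ^ 2) ⟪c₁, c₂⟫ (β 0) (β 1)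
        (by positivity) hAB (pow_pos hc₂pos 2) hred (hβ 0) (hβ 1) hge2
    have hβ0 : β 0 = 0 := by
      by_contra h0
      have hyy : y = β 0 • c₁ := by rw [hy, hβ1, hβ2, zero_smul, zero_smul, add_zero, add_zero]
      have hy0 : y ≠ 0 := by rw [hyy]; exact smul_ne_zero h0 hc₁0
      have hge : ‖c₁‖ ≤ ‖y‖ := hmin₁ y ⟨hyΛ, hy0⟩
      rw [hyy, norm_smul, Real.norm_eq_abs] at hge
      have h2 := (abs_le.1 (hβ 0)).2
      have h3 := abs_nonneg (β 0)
      linarith [mul_le_mul_of_nonneg_right (hβ 0) (norm_nonneg c₁)]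
    have hy0 : y = 0 := by
      rw [hy, hβ0, hβ1, hβ2]
      simp
    rw [hxy, hy0, zero_add]
    refine add_mem (add_mem ?_ ?_) ?_ <;> rw [Int.cast_smul_eq_zsmul ℝ]
    · exact Submodule.smul_mem _ _ (Submodule.subset_span ⟨0, hc0⟩)
    · exact Submodule.smul_mem _ _ (Submodule.subset_span ⟨1, hc1⟩)
    · exact Submodule.smul_mem _ _ (Submodule.subset_span ⟨2, hc2⟩)
  -- span equality
  have hspan : Submodule.span ℤ (Set.range c) = Λ := by
    apply le_antisymm
    · exact Submodule.span_le.2 (Set.range_subset_iff.2 fun i => hcΛ i)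
    · refine Submodule.span_le.2 ?_
      rintro v ⟨i, rfl⟩
      exact key _ (Submodule.subset_span ⟨i, rfl⟩)
  -- finrank comparison helpers
  have rank_ge : ∀ (r : ℝ) (n : ℕ) (v : Fin n → E), LinearIndependent ℝ v →
      (∀ j, v j ∈ (Λ : Set E) ∩ Metric.closedBall 0 r) →
      n ≤ finrank ℝ (Submodule.span ℝ ((Λ : Set E) ∩ Metric.closedBall 0 r)) := by
    intro r n v hv hmem
    have h1 : Submodule.span ℝ (Set.range v) ≤
        Submodule.span ℝ ((Λ : Set E) ∩ Metric.closedBall 0 r) :=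
      Submodule.span_mono (Set.range_subset_iff.2 hmem)
    have h2 := Submodule.finrank_mono h1
    rw [finrank_span_eq_card hv] at h2
    simpa using h2
  have rank_le : ∀ (r : ℝ) (P : Submodule ℝ E),
      ((Λ : Set E) ∩ Metric.closedBall 0 r) ⊆ (P : Set E) →
      finrank ℝ (Submodule.span ℝ ((Λ : Set E) ∩ Metric.closedBall 0 r)) ≤ finrank ℝ P := by
    intro r P hP
    exact Submodule.finrank_mono (Submodule.span_le.2 hP)
  refine ⟨c, hcli, hspan, ?_⟩
  have hIci1 : {r : ℝ | 1 ≤ finrank ℝ (Submodule.span ℝ ((Λ : Set E) ∩ Metric.closedBall 0 r))}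
      = Set.Ici ‖c₁‖ := by
    ext r
    simp only [Set.mem_setOf_eq, Set.mem_Ici]
    constructor
    · intro hr
      by_contra hlt
      push_neg at hlt
      have hsub : (Λ : Set E) ∩ Metric.closedBall 0 r ⊆ ((⊥ : Submodule ℝ E) : Set E) := by
        rintro v ⟨hvΛ, hvb⟩
        simp only [SetLike.mem_coe, Submodule.mem_bot]
        by_contra hv0
        exact absurd (hmin₁ v ⟨hvΛ, hv0⟩)
          (not_le.2 (lt_of_le_of_lt (mem_closedBall_zero_iff.1 hvb) hlt))
      have h := rank_le r ⊥ hsub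
      rw [finrank_bot] at h
      omega
    · intro hr
      refine rank_ge r 1 ![c₁] (linearIndependent_unique_iff.2 hc₁0) ?_
      intro j
      fin_cases j
      exact ⟨hc₁Λ, mem_closedBall_zero_iff.2 hr⟩
  have hIci2 : {r : ℝ | 2 ≤ finrank ℝ (Submodule.span ℝ ((Λ : Set E) ∩ Metric.closedBall 0 r))}
      = Set.Ici ‖c₂‖ := by
    ext r
    simp only [Set.mem_setOf_eq, Set.mem_Ici]
    constructor
    · intro hr
      by_contra hlt
      push_neg at hlt
      have hsub : (Λ : Set E) ∩ Metric.closedBall 0 r ⊆ (P₁ : Set E) := by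
        rintro v ⟨hvΛ, hvb⟩
        by_contra hv
        exact absurd (hmin₂ v ⟨hvΛ, hv⟩)
          (not_le.2 (lt_of_le_of_lt (mem_closedBall_zero_iff.1 hvb) hlt))
      have h := rank_le r P₁ hsub
      omega
    · intro hr
      have hpair : LinearIndependent ℝ ![c₁, c₂] := by
        have h : ![c₁, c₂] = c ∘ Fin.castLE (by norm_num) := by
          funext j; fin_cases j <;> rfl
        rw [h]
        exact hcli.comp _ (Fin.castLE_injective _)
      refine rank_ge r 2 ![c₁, c₂] hpair ?_
      intro j
      fin_cases j
      · exact ⟨hc₁Λ, mem_closedBall_zero_iff.2 (h01.trans hr)⟩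
      · exact ⟨hc₂Λ, mem_closedBall_zero_iff.2 hr⟩
  have hIci3 : {r : ℝ | 3 ≤ finrank ℝ (Submodule.span ℝ ((Λ : Set E) ∩ Metric.closedBall 0 r))}
      = Set.Ici ‖c₃‖ := by
    ext r
    simp only [Set.mem_setOf_eq, Set.mem_Ici]
    constructor
    · intro hr
      by_contra hlt
      push_neg at hlt
      have hsub : (Λ : Set E) ∩ Metric.closedBall 0 r ⊆ (P₂ : Set E) := by
        rintro v ⟨hvΛ, hvb⟩
        by_contra hv
        exact absurd (hmin₃ v ⟨hvΛ, hv⟩)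
          (not_le.2 (lt_of_le_of_lt (mem_closedBall_zero_iff.1 hvb) hlt))
      have h := rank_le r P₂ hsub
      omega
    · intro hr
      refine rank_ge r 3 c hcli ?_
      intro j
      fin_cases j
      · exact ⟨hc₁Λ, mem_closedBall_zero_iff.2 ((h01.trans h12).trans hr)⟩
      · exact ⟨hc₂Λ, mem_closedBall_zero_iff.2 (h12.trans hr)⟩
      · exact ⟨hc₃Λ, mem_closedBall_zero_iff.2 hr⟩
  intro i
  fin_cases i
  · show ‖c 0‖ = succMin 3 (Λ : Set E) _
    rw [hc0]
    show ‖c₁‖ = sInf {r : ℝ |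
      1 ≤ finrank ℝ (Submodule.span ℝ ((Λ : Set E) ∩ Metric.closedBall 0 r))}
    rw [hIci1, csInf_Ici]
  · show ‖c 1‖ = succMin 3 (Λ : Set E) _
    rw [hc1]
    show ‖c₂‖ = sInf {r : ℝ |
      2 ≤ finrank ℝ (Submodule.span ℝ ((Λ : Set E) ∩ Metric.closedBall 0 r))}
    rw [hIci2, csInf_Ici]
  · show ‖c 2‖ = succMin 3 (Λ : Set E) _
    rw [hc2]
    show ‖c₃‖ = sInf {r : ℝ |
      3 ≤ finrank ℝ (Submodule.span ℝ ((Λ : Set E) ∩ Metric.closedBall 0 r))}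
    rw [hIci3, csInf_Ici]
end

section
/- For n = 4: if b₁, b₂, b₃, b₄ are mutually orthogonal vectors in ℝ⁴ of equal Euclidean norm λ > 0, then the lattice Λ generated by b₁, b₂, b₃, and c = (b₁+b₂+b₃+b₄)/2 has successive minima λ₁ = λ₂ = λ₃ = λ₄ = λ, and the basis b₁, b₂, b₃, c achieves the successive minima (note ‖c‖₂ = λ). -/
private abbrev E4 := EuclideanSpace ℝ (Fin 4)

private lemma key_norm (b : Fin 4 → E4) (lam : ℝ)
    (horth : ∀ i j, i ≠ j → (inner ℝ (b i) (b j) : ℝ) = 0)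
    (hnorm : ∀ i, ‖b i‖ = lam) (q0 q1 q2 q3 : ℝ) :
    ‖q0 • b 0 + q1 • b 1 + q2 • b 2 + q3 • b 3‖ ^ 2
      = (q0 ^ 2 + q1 ^ 2 + q2 ^ 2 + q3 ^ 2) * lam ^ 2 := by
  have hd : ∀ i, (inner ℝ (b i) (b i) : ℝ) = lam ^ 2 := fun i => by
    rw [real_inner_self_eq_norm_sq, hnorm]
  have h01 := horth 0 1 (by decide)
  have h02 := horth 0 2 (by decide)
  have h03 := horth 0 3 (by decide)
  have h10 := horth 1 0 (by decide)
  have h12 := horth 1 2 (by decide)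
  have h13 := horth 1 3 (by decide)
  have h20 := horth 2 0 (by decide)
  have h21 := horth 2 1 (by decide)
  have h23 := horth 2 3 (by decide)
  have h30 := horth 3 0 (by decide)
  have h31 := horth 3 1 (by decide)
  have h32 := horth 3 2 (by decide)
  rw [← real_inner_self_eq_norm_sq]
  simp only [inner_add_left, inner_add_right, real_inner_smul_left, real_inner_smul_right,
    hd, h01, h02, h03, h10, h12, h13, h20, h21, h23, h30, h31, h32]
  ring

private lemma mem_span_four {b0 b1 b2 c : E4} {x : E4}
    (hx : x ∈ Submodule.span ℤ ({b0, b1, b2, c} : Set E4)) :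
    ∃ m0 m1 m2 m3 : ℤ,
      x = (m0:ℝ) • b0 + (m1:ℝ) • b1 + (m2:ℝ) • b2 + (m3:ℝ) • c := by
  rw [Submodule.mem_span_insert] at hx
  obtain ⟨m0, z0, hz0, rfl⟩ := hx
  rw [Submodule.mem_span_insert] at hz0
  obtain ⟨m1, z1, hz1, rfl⟩ := hz0
  rw [Submodule.mem_span_insert] at hz1
  obtain ⟨m2, z2, hz2, rfl⟩ := hz1
  rw [Submodule.mem_span_singleton] at hz2
  obtain ⟨m3, rfl⟩ := hz2
  exact ⟨m0, m1, m2, m3, by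
    simp only [← Int.cast_smul_eq_zsmul ℝ]; abel⟩

lemma sq_ge_one {n : ℤ} (h : n ≠ 0) : (1:ℤ) ≤ n ^ 2 := by
  nlinarith [Int.one_le_abs h, sq_abs n]

lemma arith (m0 m1 m2 m3 : ℤ) (h : ¬(m0 = 0 ∧ m1 = 0 ∧ m2 = 0 ∧ m3 = 0)) :
    (1:ℝ) ≤ ((m0:ℝ) + m3/2)^2 + ((m1:ℝ) + m3/2)^2 + ((m2:ℝ) + m3/2)^2 + ((m3:ℝ)/2)^2 := by
  have key : (4:ℤ) ≤ (2*m0+m3)^2 + (2*m1+m3)^2 + (2*m2+m3)^2 + m3^2 := by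
    rcases Int.even_or_odd m3 with he | ho
    · rcases eq_or_ne m3 0 with rfl | h3
      · have hm : m0 ≠ 0 ∨ m1 ≠ 0 ∨ m2 ≠ 0 := by tauto
        rcases hm with h | h | h <;>
          nlinarith [sq_ge_one h, sq_nonneg (2*m0), sq_nonneg (2*m1), sq_nonneg (2*m2),
            sq_nonneg m0, sq_nonneg m1, sq_nonneg m2]
      · obtain ⟨t, rfl⟩ := he
        have ht : t ≠ 0 := by omega
        nlinarith [sq_ge_one ht, sq_nonneg (2*m0+(t+t)), sq_nonneg (2*m1+(t+t)),
          sq_nonneg (2*m2+(t+t))]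
    · obtain ⟨t, rfl⟩ := ho
      have h0 := sq_ge_one (show 2*m0+(2*t+1) ≠ 0 by omega)
      have h1 := sq_ge_one (show 2*m1+(2*t+1) ≠ 0 by omega)
      have h2 := sq_ge_one (show 2*m2+(2*t+1) ≠ 0 by omega)
      have h3 := sq_ge_one (show 2*t+1 ≠ 0 by omega)
      linarith
  have h4 : (4:ℝ) ≤ ((2*m0+m3 : ℤ):ℝ)^2 + ((2*m1+m3 : ℤ):ℝ)^2 + ((2*m2+m3 : ℤ):ℝ)^2 + ((m3:ℤ):ℝ)^2 := by
    exact_mod_cast key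
  push_cast at h4
  nlinarith [h4]

private lemma min_norm (b : Fin 4 → E4) (lam : ℝ) (hlam : 0 < lam)
    (horth : ∀ i j, i ≠ j → (inner ℝ (b i) (b j) : ℝ) = 0)
    (hnorm : ∀ i, ‖b i‖ = lam)
    (c : E4) (hc : c = (2 : ℝ)⁻¹ • (b 0 + b 1 + b 2 + b 3))
    {x : E4} (hx : x ∈ Submodule.span ℤ ({b 0, b 1, b 2, c} : Set E4)) (hx0 : x ≠ 0) :
    lam ≤ ‖x‖ := by
  obtain ⟨m0, m1, m2, m3, hxm⟩ := mem_span_four hx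
  have hxeq : x = ((m0:ℝ) + m3/2) • b 0 + ((m1:ℝ) + m3/2) • b 1
      + ((m2:ℝ) + m3/2) • b 2 + ((m3:ℝ)/2) • b 3 := by
    rw [hxm, hc]; module
  have hsq := key_norm b lam horth hnorm ((m0:ℝ) + m3/2) ((m1:ℝ) + m3/2) ((m2:ℝ) + m3/2) ((m3:ℝ)/2)
  rw [← hxeq] at hsq
  have hm : ¬(m0 = 0 ∧ m1 = 0 ∧ m2 = 0 ∧ m3 = 0) := by
    rintro ⟨rfl, rfl, rfl, rfl⟩
    simp at hxm
    exact hx0 hxm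
  have h1 := arith m0 m1 m2 m3 hm
  nlinarith [norm_nonneg x, hlam.le]

lemma lin_indep (b : Fin 4 → E4) (lam : ℝ) (hlam : 0 < lam)
    (horth : ∀ i j, i ≠ j → (inner ℝ (b i) (b j) : ℝ) = 0)
    (hnorm : ∀ i, ‖b i‖ = lam) : LinearIndependent ℝ b := by
  rw [Fintype.linearIndependent_iff]
  intro g hg
  rw [Fin.sum_univ_four] at hg
  have h := key_norm b lam horth hnorm (g 0) (g 1) (g 2) (g 3)
  rw [hg, norm_zero] at h
  have hl2 : (0:ℝ) < lam ^ 2 := by positivity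
  have hsum : g 0 ^ 2 + g 1 ^ 2 + g 2 ^ 2 + g 3 ^ 2 = 0 := by
    have hprod : (g 0 ^ 2 + g 1 ^ 2 + g 2 ^ 2 + g 3 ^ 2) * lam ^ 2 = 0 := by linarith
    rcases mul_eq_zero.mp hprod with h' | h'
    · exact h'
    · exact absurd h' (ne_of_gt hl2)
  have h0 := sq_nonneg (g 0); have h1 := sq_nonneg (g 1)
  have h2 := sq_nonneg (g 2); have h3 := sq_nonneg (g 3)
  have e0 : g 0 = 0 := pow_eq_zero_iff two_ne_zero |>.mp (by linarith)
  have e1 : g 1 = 0 := pow_eq_zero_iff two_ne_zero |>.mp (by linarith)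
  have e2 : g 2 = 0 := pow_eq_zero_iff two_ne_zero |>.mp (by linarith)
  have e3 : g 3 = 0 := pow_eq_zero_iff two_ne_zero |>.mp (by linarith)
  intro i
  fin_cases i
  · exact e0
  · exact e1
  · exact e2
  · exact e3

private lemma rank_four (b : Fin 4 → E4) (lam : ℝ) (hlam : 0 < lam)
    (horth : ∀ i j, i ≠ j → (inner ℝ (b i) (b j) : ℝ) = 0)
    (hnorm : ∀ i, ‖b i‖ = lam)
    (c : E4) (hc : c = (2 : ℝ)⁻¹ • (b 0 + b 1 + b 2 + b 3)) (hcnorm : ‖c‖ = lam)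
    {r : ℝ} (hr : lam ≤ r) :
    4 ≤ Module.finrank ℝ (Submodule.span ℝ
      (((Submodule.span ℤ ({b 0, b 1, b 2, c} : Set E4) : Submodule ℤ E4) : Set E4)
        ∩ Metric.closedBall 0 r)) := by
  set Λ : Submodule ℤ E4 := Submodule.span ℤ ({b 0, b 1, b 2, c} : Set E4) with hΛ
  set T : Set E4 := (Λ : Set E4) ∩ Metric.closedBall 0 r with hT
  have hmemT : ∀ v : E4, v ∈ ({b 0, b 1, b 2, c} : Set E4) → ‖v‖ = lam → v ∈ T := by
    intro v hv hnv
    refine ⟨Submodule.subset_span hv, ?_⟩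
    rw [Metric.mem_closedBall, dist_zero_right, hnv]
    exact hr
  have hb0 : b 0 ∈ T := hmemT _ (by simp) (hnorm 0)
  have hb1 : b 1 ∈ T := hmemT _ (by simp) (hnorm 1)
  have hb2 : b 2 ∈ T := hmemT _ (by simp) (hnorm 2)
  have hcT : c ∈ T := hmemT _ (by simp) hcnorm
  have hb3 : b 3 = (2:ℝ) • c - b 0 - b 1 - b 2 := by rw [hc]; module
  have hspan : ∀ i : Fin 4, b i ∈ Submodule.span ℝ T := by
    intro i
    fin_cases i
    · exact Submodule.subset_span hb0
    · exact Submodule.subset_span hb1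
    · exact Submodule.subset_span hb2
    · show b 3 ∈ Submodule.span ℝ T
      rw [hb3]
      exact Submodule.sub_mem _ (Submodule.sub_mem _ (Submodule.sub_mem _
        (Submodule.smul_mem _ _ (Submodule.subset_span hcT))
        (Submodule.subset_span hb0)) (Submodule.subset_span hb1))
        (Submodule.subset_span hb2)
  have hle : Submodule.span ℝ (Set.range b) ≤ Submodule.span ℝ T := by
    rw [Submodule.span_le]
    rintro _ ⟨i, rfl⟩
    exact hspan i
  have hcard : Module.finrank ℝ (Submodule.span ℝ (Set.range b)) = 4 := by
    rw [finrank_span_eq_card (lin_indep b lam hlam horth hnorm)]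
    simp
  calc (4:ℕ) = Module.finrank ℝ (Submodule.span ℝ (Set.range b)) := hcard.symm
    _ ≤ _ := Submodule.finrank_mono hle

/-- If b₁,b₂,b₃,b₄ are mutually orthogonal of norm λ > 0 in ℝ⁴ and
c = (b₁+b₂+b₃+b₄)/2, then the lattice generated by b₁,b₂,b₃,c has all four successive
minima equal to λ, ‖c‖ = λ, and the basis b₁,b₂,b₃,c achieves the successive minima. -/
theorem stmt_15 (b : Fin 4 → EuclideanSpace ℝ (Fin 4)) (lam : ℝ) (hlam : 0 < lam)
    (horth : ∀ i j, i ≠ j → (inner ℝ (b i) (b j) : ℝ) = 0)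
    (hnorm : ∀ i, ‖b i‖ = lam)
    (c : EuclideanSpace ℝ (Fin 4)) (hc : c = (2 : ℝ)⁻¹ • (b 0 + b 1 + b 2 + b 3)) :
    ‖c‖ = lam ∧
    (∀ i : Fin 4, succMin 4
      ((Submodule.span ℤ ({b 0, b 1, b 2, c} : Set (EuclideanSpace ℝ (Fin 4))) :
        Submodule ℤ (EuclideanSpace ℝ (Fin 4))) : Set _) (i + 1) = lam) ∧
    (∀ i : Fin 4, ‖(![b 0, b 1, b 2, c]) i‖ = succMin 4
      ((Submodule.span ℤ ({b 0, b 1, b 2, c} : Set (EuclideanSpace ℝ (Fin 4))) :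
        Submodule ℤ (EuclideanSpace ℝ (Fin 4))) : Set _) (i + 1)) := by
  have hcnorm : ‖c‖ = lam := by
    have hce : c = (1/2:ℝ) • b 0 + (1/2:ℝ) • b 1 + (1/2:ℝ) • b 2 + (1/2:ℝ) • b 3 := by
      rw [hc]; module
    have h := key_norm b lam horth hnorm (1/2) (1/2) (1/2) (1/2)
    rw [← hce] at h
    have h' : ‖c‖ ^ 2 = lam ^ 2 := by rw [h]; ring
    nlinarith [norm_nonneg c, hlam.le]
  have hmin : ∀ k : ℕ, 1 ≤ k → k ≤ 4 →
      succMin 4 ((Submodule.span ℤ ({b 0, b 1, b 2, c} : Set E4) : Submodule ℤ E4) : Set E4) k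
        = lam := by
    intro k hk1 hk4
    unfold succMin
    have hset : {r : ℝ | k ≤ Module.finrank ℝ (Submodule.span ℝ
        (((Submodule.span ℤ ({b 0, b 1, b 2, c} : Set E4) : Submodule ℤ E4) : Set E4)
          ∩ Metric.closedBall 0 r))} = Set.Ici lam := by
      ext r
      simp only [Set.mem_setOf_eq, Set.mem_Ici]
      constructor
      · intro h
        by_contra hr
        push_neg at hr
        have hzero : ((Submodule.span ℤ ({b 0, b 1, b 2, c} : Set E4) : Submodule ℤ E4) : Set E4)
            ∩ Metric.closedBall 0 r ⊆ {0} := by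
          rintro x ⟨hxΛ, hxB⟩
          by_contra hx0
          simp only [Set.mem_singleton_iff] at hx0
          have h1 := min_norm b lam hlam horth hnorm c hc hxΛ hx0
          rw [Metric.mem_closedBall, dist_zero_right] at hxB
          linarith
        have hbot : Submodule.span ℝ (((Submodule.span ℤ ({b 0, b 1, b 2, c} : Set E4) :
            Submodule ℤ E4) : Set E4) ∩ Metric.closedBall 0 r) = ⊥ := by
          rw [← le_bot_iff, Submodule.span_le]
          intro x hx
          exact hzero hx
        rw [hbot] at h
        simp [finrank_bot] at h
        omega
      · intro h
        exact le_trans hk4 (rank_four b lam hlam horth hnorm c hc hcnorm h)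
    rw [hset, csInf_Ici]
  refine ⟨hcnorm, fun i => hmin (i + 1) (by omega) (by omega), fun i => ?_⟩
  rw [hmin (i + 1) (by omega) (by omega)]
  fin_cases i
  · simpa using hnorm 0
  · simpa using hnorm 1
  · simpa using hnorm 2
  · simpa using hcnorm
end

section
/- Let ‖·‖ be an arbitrary norm on ℝ², Λ ⊆ ℝ² a full-rank lattice, b₁ ∈ Λ a nonzero vector of minimal norm, and b₂ ∈ Λ such that (b₁, b₂) is a ℤ-basis of Λ and ‖b₂‖ is minimal among all u with (b₁, u) a ℤ-basis of Λ. Then ‖b₁‖ = λ₁ and ‖b₂‖ = λ₂, where λ₁, λ₂ are the successive minima of Λ with respect to ‖·‖. In particular, every lattice in ℝ² with an arbitrary norm is standard. -/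
lemma aux_key {E : Type*} [NormedAddCommGroup E] [NormedSpace ℝ E]
    (b1 b2 : E) (h12 : ‖b1‖ ≤ ‖b2‖)
    (hmin : ∀ q : ℤ, ‖b2‖ ≤ ‖q • b1 + b2‖)
    (α β : ℤ) (hβ : 0 < β) : ‖b2‖ ≤ ‖α • b1 + β • b2‖ := by
  set q := α / β with hq
  set r := α % β with hr
  have hr0 : (0:ℤ) ≤ r := Int.emod_nonneg α hβ.ne'
  have hrβ : r < β := Int.emod_lt_of_pos α hβ
  have hα : α = β * q + r := (Int.mul_ediv_add_emod α β).symm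
  set w := q • b1 + b2 with hw
  have key : (α • b1 + β • b2) - r • b1 = β • w := by
    rw [hα, hw, smul_add, smul_smul, add_smul]; abel
  have hwn : ‖b2‖ ≤ ‖w‖ := hmin q
  have h1w : ‖b1‖ ≤ ‖w‖ := h12.trans hwn
  have hβR : (0:ℝ) < (β:ℝ) := by exact_mod_cast hβ
  have hrR : (0:ℝ) ≤ (r:ℝ) := by exact_mod_cast hr0
  have hnorm : (β:ℝ) * ‖w‖ ≤ ‖α • b1 + β • b2‖ + (r:ℝ) * ‖b1‖ := by
    have e1 : ‖β • w‖ = (β:ℝ) * ‖w‖ := by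
      rw [← Int.cast_smul_eq_zsmul ℝ, norm_smul, Real.norm_eq_abs, abs_of_pos hβR]
    have e2 : ‖r • b1‖ = (r:ℝ) * ‖b1‖ := by
      rw [← Int.cast_smul_eq_zsmul ℝ, norm_smul, Real.norm_eq_abs, abs_of_nonneg hrR]
    calc (β:ℝ) * ‖w‖ = ‖(α • b1 + β • b2) - r • b1‖ := by rw [key, e1]
      _ ≤ ‖α • b1 + β • b2‖ + ‖r • b1‖ := norm_sub_le _ _
      _ = ‖α • b1 + β • b2‖ + (r:ℝ) * ‖b1‖ := by rw [e2]
  have p1 : (r:ℝ) * ‖b1‖ ≤ (r:ℝ) * ‖w‖ := mul_le_mul_of_nonneg_left h1w hrR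
  have p2 : (r:ℝ) * ‖w‖ ≤ ((β:ℝ) - 1) * ‖w‖ :=
    mul_le_mul_of_nonneg_right (by exact_mod_cast (by omega : r ≤ β - 1)) (norm_nonneg w)
  linarith

lemma aux_span_pair {E : Type*} [AddCommGroup E] (q : ℤ) (b1 b2 : E) :
    Submodule.span ℤ ({b1, q • b1 + b2} : Set E) = Submodule.span ℤ ({b1, b2} : Set E) := by
  apply le_antisymm
  · rw [Submodule.span_le, Set.insert_subset_iff, Set.singleton_subset_iff]
    constructor
    · exact Submodule.subset_span (Set.mem_insert _ _)
    · exact Submodule.mem_span_pair.mpr ⟨q, 1, by simp⟩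
  · rw [Submodule.span_le, Set.insert_subset_iff, Set.singleton_subset_iff]
    constructor
    · exact Submodule.subset_span (Set.mem_insert _ _)
    · refine Submodule.mem_span_pair.mpr ⟨-q, 1, ?_⟩
      simp [neg_smul]

/-- The i-th successive minimum of a subset Λ of a normed space (arbitrary norm). -/
noncomputable def succMinE {E : Type*} [NormedAddCommGroup E] [NormedSpace ℝ E]
    (Λ : Set E) (i : ℕ) : ℝ :=
  sInf {r : ℝ | i ≤ Module.finrank ℝ (Submodule.span ℝ (Λ ∩ Metric.closedBall 0 r))}

/-- With an arbitrary norm on ℝ², if b₁ is a shortest nonzero lattice vector and b₂ is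
shortest among vectors completing b₁ to a ℤ-basis, then ‖b₁‖ = λ₁ and ‖b₂‖ = λ₂; in
particular every lattice in ℝ² is standard. -/
theorem stmt_16 {E : Type*} [NormedAddCommGroup E] [NormedSpace ℝ E]
    (hdim : Module.finrank ℝ E = 2)
    (B : Fin 2 → E) (hB : LinearIndependent ℝ B)
    (b1 b2 : E)
    (hb1mem : b1 ∈ Submodule.span ℤ (Set.range B)) (hb10 : b1 ≠ 0)
    (hb1min : ∀ x ∈ Submodule.span ℤ (Set.range B), x ≠ 0 → ‖b1‖ ≤ ‖x‖)
    (hb2li : LinearIndependent ℝ ![b1, b2])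
    (hb2span : Submodule.span ℤ ({b1, b2} : Set E) = Submodule.span ℤ (Set.range B))
    (hb2min : ∀ u : E, LinearIndependent ℝ ![b1, u] →
      Submodule.span ℤ ({b1, u} : Set E) = Submodule.span ℤ (Set.range B) → ‖b2‖ ≤ ‖u‖) :
    ‖b1‖ = succMinE ((Submodule.span ℤ (Set.range B) : Submodule ℤ E) : Set E) 1 ∧
    ‖b2‖ = succMinE ((Submodule.span ℤ (Set.range B) : Submodule ℤ E) : Set E) 2 := by
  haveI : FiniteDimensional ℝ E := FiniteDimensional.of_finrank_pos (by omega)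
  set Λ : Set E := ((Submodule.span ℤ (Set.range B) : Submodule ℤ E) : Set E) with hΛ
  -- basic facts
  have hb20 : b2 ≠ 0 := hb2li.ne_zero 1
  have hb2mem : b2 ∈ Submodule.span ℤ (Set.range B) := by
    rw [← hb2span]; exact Submodule.subset_span (Set.mem_insert_of_mem _ rfl)
  have h12 : ‖b1‖ ≤ ‖b2‖ := hb1min b2 hb2mem hb20
  -- ∀ q, the vector q•b1 + b2 also completes b1 to a basis
  have hmin : ∀ q : ℤ, ‖b2‖ ≤ ‖q • b1 + b2‖ := by
    intro q
    apply hb2min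
    · rw [LinearIndependent.pair_iff]
      intro s t hst
      have h' : (s + t * (q:ℝ)) • b1 + t • b2 = 0 := by
        rw [← Int.cast_smul_eq_zsmul ℝ q b1] at hst
        rw [add_smul, mul_smul]
        rw [smul_add] at hst
        linear_combination (norm := abel) hst
      obtain ⟨h1, h2⟩ := (LinearIndependent.pair_iff.mp hb2li) _ _ h'
      refine ⟨?_, h2⟩
      rw [h2] at h1
      simpa using h1
    · rw [aux_span_pair]; exact hb2span
  -- key bound: any lattice vector outside ℝ·b1 has norm ≥ ‖b2‖
  have hkey : ∀ v : E, v ∈ Λ → v ∉ Submodule.span ℝ ({b1} : Set E) → ‖b2‖ ≤ ‖v‖ := by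
    intro v hv hv1
    have hv' : v ∈ Submodule.span ℤ ({b1, b2} : Set E) := by rw [hb2span]; exact hv
    obtain ⟨α, β, hαβ⟩ := Submodule.mem_span_pair.mp hv'
    have hβ0 : β ≠ 0 := by
      rintro rfl
      apply hv1
      rw [← hαβ]
      simp only [zero_smul, add_zero]
      rw [← Int.cast_smul_eq_zsmul ℝ α b1]
      exact Submodule.smul_mem _ _ (Submodule.subset_span rfl)
    rcases hβ0.lt_or_gt with h | h
    · have := aux_key b1 b2 h12 hmin (-α) (-β) (by omega)
      rw [← hαβ]
      calc ‖b2‖ ≤ ‖(-α) • b1 + (-β) • b2‖ := this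
        _ = ‖-(α • b1 + β • b2)‖ := by rw [neg_add, neg_smul, neg_smul]
        _ = ‖α • b1 + β • b2‖ := norm_neg _
    · rw [← hαβ]; exact aux_key b1 b2 h12 hmin α β h
  constructor
  · -- first minimum
    apply le_antisymm
    · apply le_csInf
      · refine ⟨‖b1‖, ?_⟩
        have hb1in : b1 ∈ Submodule.span ℝ (Λ ∩ Metric.closedBall 0 ‖b1‖) :=
          Submodule.subset_span ⟨hb1mem, by simp [mem_closedBall_zero_iff]⟩
        have : Nontrivial (Submodule.span ℝ (Λ ∩ Metric.closedBall 0 ‖b1‖)) :=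
          ⟨⟨b1, hb1in⟩, 0, by simp [hb10]⟩
        show (1:ℕ) ≤ Module.finrank ℝ (Submodule.span ℝ (Λ ∩ Metric.closedBall 0 ‖b1‖))
        exact Module.finrank_pos_iff.mpr this
      · intro r hr
        by_contra hcon
        push_neg at hcon
        have hsub : Λ ∩ Metric.closedBall 0 r ⊆ {0} := by
          rintro x ⟨hx1, hx2⟩
          by_contra hx0
          have : ‖b1‖ ≤ ‖x‖ := hb1min x hx1 hx0
          rw [mem_closedBall_zero_iff] at hx2
          exact absurd (this.trans hx2) (not_le.mpr hcon)
        have hbot : Submodule.span ℝ (Λ ∩ Metric.closedBall 0 r) = ⊥ :=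
          Submodule.span_eq_bot.mpr (fun x hx => hsub hx)
        rw [Set.mem_setOf_eq, hbot, finrank_bot] at hr
        omega
    · apply csInf_le
      · refine ⟨0, fun r hr => ?_⟩
        by_contra hcon
        push_neg at hcon
        have : Λ ∩ Metric.closedBall 0 r = ∅ := by
          ext x
          simp only [Set.mem_inter_iff, mem_closedBall_zero_iff, Set.mem_empty_iff_false,
            iff_false, not_and]
          intro _ hx
          linarith [norm_nonneg x]
        rw [Set.mem_setOf_eq, this, Submodule.span_empty, finrank_bot] at hr
        omega
      · show (1:ℕ) ≤ _
        have hb1in : b1 ∈ Submodule.span ℝ (Λ ∩ Metric.closedBall 0 ‖b1‖) :=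
          Submodule.subset_span ⟨hb1mem, by simp [mem_closedBall_zero_iff]⟩
        have : Nontrivial (Submodule.span ℝ (Λ ∩ Metric.closedBall 0 ‖b1‖)) :=
          ⟨⟨b1, hb1in⟩, 0, by simp [hb10]⟩
        exact Module.finrank_pos_iff.mpr this
  · -- second minimum
    have hmem2 : (2:ℕ) ≤ Module.finrank ℝ
        (Submodule.span ℝ (Λ ∩ Metric.closedBall 0 ‖b2‖)) := by
      have hsub : ({b1, b2} : Set E) ⊆ Λ ∩ Metric.closedBall 0 ‖b2‖ := by
        rintro x (rfl | rfl)
        · exact ⟨hb1mem, by simp [mem_closedBall_zero_iff, h12]⟩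
        · exact ⟨hb2mem, by simp [mem_closedBall_zero_iff]⟩
      have h2 : Module.finrank ℝ (Submodule.span ℝ ({b1, b2} : Set E)) = 2 := by
        have := finrank_span_eq_card hb2li
        rwa [show Set.range ![b1, b2] = {b1, b2} by
          ext x; simp [Fin.exists_fin_two, eq_comm, or_comm], Fintype.card_fin] at this
      calc (2:ℕ) = Module.finrank ℝ (Submodule.span ℝ ({b1, b2} : Set E)) := h2.symm
        _ ≤ _ := Submodule.finrank_mono (Submodule.span_mono hsub)
    apply le_antisymm
    · apply le_csInf ⟨‖b2‖, hmem2⟩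
      intro r hr
      simp only [Set.mem_setOf_eq] at hr
      -- find a lattice point in the ball outside ℝ·b1
      have : ∃ v ∈ Λ ∩ Metric.closedBall 0 r, v ∉ Submodule.span ℝ ({b1} : Set E) := by
        by_contra hcon
        push_neg at hcon
        have hle : Submodule.span ℝ (Λ ∩ Metric.closedBall 0 r) ≤
            Submodule.span ℝ ({b1} : Set E) := by
          rw [Submodule.span_le]
          exact fun x hx => hcon x hx
        have := Submodule.finrank_mono hle
        rw [show Submodule.span ℝ ({b1} : Set E) = ℝ ∙ b1 from rfl,
          finrank_span_singleton hb10] at this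
        omega
      obtain ⟨v, ⟨hvΛ, hvball⟩, hv1⟩ := this
      have := hkey v hvΛ hv1
      rw [mem_closedBall_zero_iff] at hvball
      linarith
    · exact csInf_le ⟨0, fun r hr => by
        by_contra hcon
        push_neg at hcon
        have : Λ ∩ Metric.closedBall 0 r = ∅ := by
          ext x
          simp only [Set.mem_inter_iff, mem_closedBall_zero_iff, Set.mem_empty_iff_false,
            iff_false, not_and]
          intro _ hx
          linarith [norm_nonneg x]
        rw [Set.mem_setOf_eq, this, Submodule.span_empty, finrank_bot] at hr
        omega⟩ hmem2
end

section
/- For n ≥ 3, the lattice Λₙ = {a ∈ ℤⁿ : a₁ ≡ ⋯ ≡ aₙ (mod 2)} equipped with the L¹ norm is non-standard: its successive minima are λ₁ = ⋯ = λₙ = 2, but every ℤ-basis of Λₙ contains a vector with all coordinates odd, which has L¹ norm at least n > 2. -/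
lemma norm_L1 {n : ℕ} (x : PiLp 1 fun _ : Fin n => ℝ) : ‖x‖ = ∑ i, |x i| := by
  rw [PiLp.norm_eq_sum (by simp)]
  simp [Real.norm_eq_abs]

/-- The lattice Λₙ of integer vectors all of whose coordinates are congruent mod 2,
viewed inside ℝⁿ with the L¹ norm. -/
def Lat1 (n : ℕ) : Set (PiLp 1 fun _ : Fin n => ℝ) :=
  {x | ∃ a : Fin n → ℤ, (∀ i, x i = a i) ∧ ∀ i j, a i % 2 = a j % 2}

/-- The i-th successive minimum of a lattice in ℝⁿ with the L¹ norm. -/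
noncomputable def succMin1 (n : ℕ) (Λ : Set (PiLp 1 fun _ : Fin n => ℝ)) (i : ℕ) : ℝ :=
  sInf {r : ℝ | i ≤ Module.finrank ℝ (Submodule.span ℝ (Λ ∩ Metric.closedBall 0 r))}

lemma lat_small {n : ℕ} (hn : 3 ≤ n) {x : PiLp 1 fun _ : Fin n => ℝ}
    (hx : x ∈ Lat1 n) (hnorm : ‖x‖ < 2) : x = 0 := by
  obtain ⟨a, ha, hpar⟩ := hx
  have h0 : (0:ℕ) < n := by omega
  rcases Int.emod_two_eq (a ⟨0, h0⟩) with he | ho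
  · -- all even
    have hall : ∀ i, a i % 2 = 0 := fun i => (hpar i ⟨0, h0⟩).trans he
    have hz : ∀ i, a i = 0 := by
      intro i
      by_contra h
      have h2 : (2:ℤ) ≤ |a i| := by
        rw [Int.abs_eq_natAbs]
        have := hall i
        omega
      have h2' : (2:ℝ) ≤ |x i| := by
        rw [ha i, ← Int.cast_abs]
        exact_mod_cast h2
      have hle : |x i| ≤ ‖x‖ := by
        rw [norm_L1]
        exact Finset.single_le_sum (fun j _ => abs_nonneg (x j)) (Finset.mem_univ i)
      linarith
    ext i
    simp [ha i, hz i]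
  · -- all odd : norm ≥ n ≥ 3, contradiction
    exfalso
    have hall : ∀ i, a i % 2 = 1 := fun i => (hpar i ⟨0, h0⟩).trans ho
    have h1 : ∀ i, (1:ℝ) ≤ |x i| := by
      intro i
      rw [ha i, ← Int.cast_abs]
      have h1' : (1:ℤ) ≤ |a i| := by
        rw [Int.abs_eq_natAbs]
        have := hall i
        omega
      exact_mod_cast h1'
    have hns : (n:ℝ) ≤ ‖x‖ := by
      rw [norm_L1]
      calc (n:ℝ) = ∑ _i : Fin n, (1:ℝ) := by simp
        _ ≤ ∑ i, |x i| := Finset.sum_le_sum fun i _ => h1 i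
    have : (3:ℝ) ≤ (n:ℝ) := by exact_mod_cast hn
    linarith

lemma span_top {n : ℕ} (hn : 3 ≤ n) {r : ℝ} (hr : 2 ≤ r) :
    Submodule.span ℝ (Lat1 n ∩ Metric.closedBall 0 r) = ⊤ := by
  set E := PiLp 1 fun _ : Fin n => ℝ
  set B : Module.Basis (Fin n) ℝ E :=
    (Pi.basisFun ℝ (Fin n)).map (WithLp.linearEquiv 1 ℝ (Fin n → ℝ)).symm with hB
  rw [eq_top_iff, ← B.span_eq]
  apply Submodule.span_le.mpr
  rintro _ ⟨i, rfl⟩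
  set v : E := (WithLp.equiv 1 (Fin n → ℝ)).symm (Pi.single i (2:ℝ)) with hv
  have hvj : ∀ j, v j = if j = i then (2:ℝ) else 0 := by
    intro j
    rw [hv, WithLp.equiv_symm_apply, PiLp.toLp_apply, Pi.single_apply]
  have hvmem : v ∈ Lat1 n ∩ Metric.closedBall 0 r := by
    constructor
    · refine ⟨fun j => if j = i then 2 else 0, fun j => ?_, fun j k => ?_⟩
      · rw [hvj j]; by_cases h : j = i <;> simp [h]
      · by_cases h : j = i <;> by_cases h' : k = i <;> simp [h, h']
    · rw [Metric.mem_closedBall, dist_zero_right, norm_L1]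
      have habs : ∀ j, |v j| = if j = i then (2:ℝ) else 0 := by
        intro j; rw [hvj j]; by_cases h : j = i <;> simp [h]
      rw [Finset.sum_congr rfl (fun j _ => habs j)]
      simp [hr]
  have hBv : B i = (2⁻¹:ℝ) • v := by
    apply (PiLp.ext : _)
    intro j
    rw [PiLp.smul_apply, hvj j]
    rw [hB]
    simp only [Module.Basis.map_apply, Pi.basisFun_apply]
    show Pi.single (M := fun _ : Fin n => ℝ) i (1:ℝ) j = _
    rw [Pi.single_apply]
    by_cases h : j = i <;> simp [h]
  rw [hBv]
  exact Submodule.smul_mem _ _ (Submodule.subset_span hvmem)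

lemma set_eq {n : ℕ} (hn : 3 ≤ n) (i : Fin n) :
    {r : ℝ | (i:ℕ) + 1 ≤ Module.finrank ℝ
      (Submodule.span ℝ (Lat1 n ∩ Metric.closedBall 0 r))} = Set.Ici 2 := by
  have hfr : Module.finrank ℝ (PiLp 1 fun _ : Fin n => ℝ) = n := by
    rw [Module.finrank_eq_card_basis
      ((Pi.basisFun ℝ (Fin n)).map (WithLp.linearEquiv 1 ℝ (Fin n → ℝ)).symm)]
    simp
  ext r
  simp only [Set.mem_setOf_eq, Set.mem_Ici]
  constructor
  · intro h
    by_contra hr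
    push_neg at hr
    have hsub : Lat1 n ∩ Metric.closedBall 0 r ⊆ {0} := by
      rintro x ⟨hx, hb⟩
      rw [Metric.mem_closedBall, dist_zero_right] at hb
      exact lat_small hn hx (lt_of_le_of_lt hb hr)
    have hbot : Submodule.span ℝ (Lat1 n ∩ Metric.closedBall 0 r) = ⊥ := by
      rw [← le_bot_iff]
      refine Submodule.span_le.mpr ?_
      intro x hx
      simp [hsub hx]
    rw [hbot, finrank_bot] at h
    omega
  · intro hr
    rw [span_top hn hr, finrank_top, hfr]
    omega


/-- For n ≥ 3, the lattice Λₙ with the L¹ norm is non-standard: its successive minima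
all equal 2, but every ℤ-basis contains a vector with all coordinates odd, whose L¹ norm
is at least n > 2; so no ℤ-basis achieves the successive minima. -/
theorem stmt_19 (n : ℕ) (hn : 3 ≤ n) :
    (∀ i : Fin n, succMin1 n (Lat1 n) (i + 1) = 2) ∧
    (2 : ℝ) < n ∧
    ∀ b : Fin n → PiLp 1 (fun _ : Fin n => ℝ),
      LinearIndependent ℝ b →
      ((Submodule.span ℤ (Set.range b) :
          Submodule ℤ (PiLp 1 fun _ : Fin n => ℝ)) : Set _) = Lat1 n →
      (∃ k : Fin n, (∀ i, ∃ m : ℤ, b k i = 2 * m + 1) ∧ (n : ℝ) ≤ ‖b k‖) ∧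
      ¬ ∀ i : Fin n, ‖b i‖ = succMin1 n (Lat1 n) (i + 1) := by
  have hmin : ∀ i : Fin n, succMin1 n (Lat1 n) (i + 1) = 2 := by
    intro i
    unfold succMin1
    rw [set_eq hn i]
    exact csInf_Ici
  have h3r : (3:ℝ) ≤ (n:ℝ) := by exact_mod_cast hn
  refine ⟨hmin, by linarith, ?_⟩
  intro b hli hspan
  have h0 : 0 < n := by omega
  set i0 : Fin n := ⟨0, h0⟩ with hi0
  set S : Submodule ℤ (PiLp 1 fun _ : Fin n => ℝ) :=
    { carrier := {x | ∃ m : ℤ, x i0 = 2 * m}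
      add_mem' := by
        rintro x y ⟨mx, hx⟩ ⟨my, hy⟩
        refine ⟨mx + my, ?_⟩
        have : (x + y) i0 = x i0 + y i0 := rfl
        rw [this, hx, hy]; push_cast; ring
      zero_mem' := ⟨0, by simp⟩
      smul_mem' := by
        rintro c x ⟨mx, hx⟩
        refine ⟨c * mx, ?_⟩
        have : (c • x) i0 = (c:ℝ) * x i0 := by
          have h1 : (c • x) i0 = c • (x i0) := rfl
          rw [h1, zsmul_eq_mul]
        rw [this, hx]; push_cast; ring } with hS
  set o : PiLp 1 fun _ : Fin n => ℝ := (WithLp.equiv 1 (Fin n → ℝ)).symm (fun _ => 1) with ho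
  have hoi : ∀ i, o i = (1:ℝ) := fun i => rfl
  have homem : o ∈ Lat1 n := ⟨fun _ => 1, fun i => by rw [hoi i]; norm_num, fun i j => rfl⟩
  have hospan : o ∈ Submodule.span ℤ (Set.range b) := by
    rw [← SetLike.mem_coe, hspan]; exact homem
  have hk : ¬ ∀ k, b k ∈ S := by
    intro hall
    have hle : Submodule.span ℤ (Set.range b) ≤ S :=
      Submodule.span_le.mpr (by rintro _ ⟨k, rfl⟩; exact hall k)
    obtain ⟨m, hm⟩ := hle hospan
    rw [hoi i0] at hm
    have : (1:ℤ) = 2 * m := Int.cast_injective (α := ℝ) (by rw [Int.cast_mul, Int.cast_one]; exact hm)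
    omega
  push_neg at hk
  obtain ⟨k, hk⟩ := hk
  have hbk : b k ∈ Lat1 n := by
    rw [← hspan]; exact Submodule.subset_span ⟨k, rfl⟩
  obtain ⟨a, ha, hpar⟩ := hbk
  have hodd : a i0 % 2 = 1 := by
    rcases Int.emod_two_eq (a i0) with he | hO
    · exfalso
      refine hk ⟨a i0 / 2, ?_⟩
      rw [ha i0]
      have h := congrArg (Int.cast : ℤ → ℝ) (by omega : a i0 = 2 * (a i0 / 2))
      rw [Int.cast_mul] at h; exact h
    · exact hO
  have hoddall : ∀ i, a i % 2 = 1 := fun i => (hpar i i0).trans hodd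
  have hrep : ∀ i, ∃ m : ℤ, b k i = 2 * m + 1 := by
    intro i
    refine ⟨a i / 2, ?_⟩
    rw [ha i]
    have h := congrArg (Int.cast : ℤ → ℝ)
      (by have := hoddall i; omega : a i = 2 * (a i / 2) + 1)
    push_cast at h; exact h
  have hnormk : (n:ℝ) ≤ ‖b k‖ := by
    rw [norm_L1]
    have h1 : ∀ i, (1:ℝ) ≤ |b k i| := by
      intro i
      rw [ha i, ← Int.cast_abs]
      have h1' : (1:ℤ) ≤ |a i| := by
        rw [Int.abs_eq_natAbs]
        have := hoddall i
        omega
      exact_mod_cast h1'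
    calc (n:ℝ) = ∑ _i : Fin n, (1:ℝ) := by simp
      _ ≤ ∑ i, |b k i| := Finset.sum_le_sum fun i _ => h1 i
  refine ⟨⟨k, hrep, hnormk⟩, ?_⟩
  intro hallnorm
  have h2 := hallnorm k
  rw [hmin k] at h2
  rw [h2] at hnormk
  linarith
end
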